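/- arXiv:2206.14067 — 14 statements merged into one kernel-verified Lean document; each statement's English description precedes it below -/
import Mathlib

section
/- There are infinitely many triples (a, b, c) of integers with a, b > 1, gcd(a, b) = 1, and c odd such that the equation a^x + b^y = c^z has exactly two solutions in positive integers (x, y, z). -/
private lemma one_add_nilsq_pow {R : Type*} [CommRing R] (v : R) (hv : v ^ 2 = 0) :
    ∀ n : ℕ, (1 + v) ^ n = 1 + (n : R) * v := by
  intro n
  induction n with
  | zero => simp
  | succ n ih =>
    rw [pow_succ, ih]
    push_cast
    linear_combination (n : R) * hv

private lemma pow2_mod9 (n : ℕ) : 2 ^ n % 9 = 2 ^ (n % 6) % 9 := by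
  conv_lhs => rw [← Nat.div_add_mod n 6]
  rw [pow_add, pow_mul, Nat.mul_mod, Nat.pow_mod]
  norm_num

private lemma pow3_mod4 (n : ℕ) : 3 ^ n % 4 = 3 ^ (n % 2) % 4 := by
  conv_lhs => rw [← Nat.div_add_mod n 2]
  rw [pow_add, pow_mul, Nat.mul_mod, Nat.pow_mod]
  norm_num

private lemma odd_sq_mod8 {m : ℕ} (hm : m % 2 = 1) : m ^ 2 % 8 = 1 := by
  obtain ⟨n, rfl⟩ : ∃ n, m = 2 * n + 1 := ⟨m / 2, by omega⟩
  have h1 : (2*n+1)^2 = 4 * (n * (n+1)) + 1 := by ring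
  have h2 : 2 ∣ n * (n + 1) := (Nat.even_mul_succ_self n).two_dvd
  omega

private lemma exp_eq_of_modeq {k m w : ℕ} (hk : 1 ≤ k) (hw : w % 2 = 1)
    (h : 2 ^ m ≡ w * 2 ^ k [MOD 2 ^ (2 * k)]) : m = k := by
  by_contra hne
  have hd : ((2:ℤ) ^ (2 * k)) ∣ ((w : ℤ) * 2 ^ k - 2 ^ m) := by
    have hdd := h.dvd
    push_cast at hdd
    exact hdd
  rcases lt_or_gt_of_ne hne with hlt | hgt
  · have h1 : ((2:ℤ) ^ (m + 1)) ∣ ((w:ℤ) * 2 ^ k - 2 ^ m) :=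
      dvd_trans (pow_dvd_pow 2 (by omega)) hd
    have h2 : ((2:ℤ) ^ (m + 1)) ∣ ((w:ℤ) * 2 ^ k) :=
      Dvd.dvd.mul_left (pow_dvd_pow 2 (by omega)) (w:ℤ)
    have h3 : ((2:ℤ) ^ (m + 1)) ∣ (2:ℤ) ^ m := by
      have := dvd_sub h2 h1
      simpa using this
    have h4 : ((2:ℤ) ^ (m+1)) ≤ 2 ^ m := Int.le_of_dvd (by positivity) h3
    have h6 : (0:ℤ) < 2 ^ m := by positivity
    have h5 : ((2:ℤ) ^ (m+1)) = 2 * 2 ^ m := by ring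
    linarith
  · have h1 : ((2:ℤ) ^ (k + 1)) ∣ ((w:ℤ) * 2 ^ k - 2 ^ m) :=
      dvd_trans (pow_dvd_pow 2 (by omega)) hd
    have h2 : ((2:ℤ) ^ (k + 1)) ∣ (2:ℤ) ^ m := pow_dvd_pow 2 (by omega)
    have h3 : ((2:ℤ) ^ (k + 1)) ∣ ((w:ℤ) * 2 ^ k) := by
      have := dvd_add h1 h2
      simpa using this
    have h4 : (2:ℤ) ∣ (w:ℤ) := by
      have h5 : ((2:ℤ) ^ k) * 2 ∣ ((2:ℤ) ^ k) * w := by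
        have e1 : ((2:ℤ)^k) * 2 = 2 ^ (k+1) := by ring
        have e2 : ((2:ℤ)^k) * w = w * 2 ^ k := by ring
        rw [e1, e2]; exact h3
      exact (mul_dvd_mul_iff_left (pow_ne_zero k (two_ne_zero))).mp h5
    have : (2:ℕ) ∣ w := by exact_mod_cast h4
    omega

private lemma nilsq_2k (k : ℕ) : ((2 : ZMod (2 ^ (2 * k))) ^ k) ^ 2 = 0 := by
  have h0 : ((2 ^ (2 * k) : ℕ) : ZMod (2 ^ (2 * k))) = 0 := ZMod.natCast_self _
  push_cast at h0
  rw [← pow_mul, mul_comm k 2]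
  exact h0

private lemma modeq_aux1 {k A C x y z : ℕ} (hA1 : A + 1 = 2 ^ k) (hC : C = 2 ^ k + 1)
    (hx2 : x % 2 = 0) (heq : A ^ x + 2 ^ y = C ^ z) :
    2 ^ y ≡ (z + x) * 2 ^ k [MOD 2 ^ (2 * k)] := by
  have hNe := nilsq_2k k
  have hAker : ((A : ℕ) : ZMod (2 ^ (2 * k))) = (2 : ZMod (2 ^ (2 * k))) ^ k - 1 := by
    have h1 := congrArg (fun n : ℕ => (n : ZMod (2 ^ (2 * k)))) hA1
    push_cast at h1
    exact eq_sub_of_add_eq h1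
  have hCker : ((C : ℕ) : ZMod (2 ^ (2 * k))) = 1 + (2 : ZMod (2 ^ (2 * k))) ^ k := by
    have h1 := congrArg (fun n : ℕ => (n : ZMod (2 ^ (2 * k)))) hC
    push_cast at h1
    rw [h1]; ring
  have e2 : ((C : ℕ) : ZMod (2 ^ (2 * k))) ^ z
      = 1 + (z : ZMod (2 ^ (2 * k))) * (2 : ZMod (2 ^ (2 * k))) ^ k := by
    rw [hCker]
    exact one_add_nilsq_pow _ hNe z
  have e1 : ((A : ℕ) : ZMod (2 ^ (2 * k))) ^ x
      = 1 - (x : ZMod (2 ^ (2 * k))) * (2 : ZMod (2 ^ (2 * k))) ^ k := by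
    rw [hAker]
    have hEx : Even x := Nat.even_iff.mpr hx2
    have h1 : ((2 : ZMod (2 ^ (2 * k))) ^ k - 1)
        = -(1 + -((2 : ZMod (2 ^ (2 * k))) ^ k)) := by ring
    rw [h1, hEx.neg_pow,
      one_add_nilsq_pow (-((2 : ZMod (2 ^ (2 * k))) ^ k)) (by rw [neg_sq]; exact hNe)]
    ring
  have hkey : ((2 ^ y : ℕ) : ZMod (2 ^ (2 * k)))
      = (((z + x) * 2 ^ k : ℕ) : ZMod (2 ^ (2 * k))) := by
    have hc := congrArg (fun n : ℕ => (n : ZMod (2 ^ (2 * k)))) heq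
    push_cast at hc
    push_cast
    linear_combination hc + e2 - e1
  exact (ZMod.natCast_eq_natCast_iff _ _ _).mp hkey

private lemma modeq_aux2 {k A X t : ℕ} (hA1 : A + 1 = 2 ^ k) (hXodd : X % 2 = 1)
    (h : A ^ X + 1 = 2 ^ t) :
    2 ^ t ≡ X * 2 ^ k [MOD 2 ^ (2 * k)] := by
  have hNe := nilsq_2k k
  have hAker : ((A : ℕ) : ZMod (2 ^ (2 * k))) = (2 : ZMod (2 ^ (2 * k))) ^ k - 1 := by
    have h1 := congrArg (fun n : ℕ => (n : ZMod (2 ^ (2 * k)))) hA1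
    push_cast at h1
    exact eq_sub_of_add_eq h1
  have hXo : Odd X := Nat.odd_iff.mpr hXodd
  have e3 : ((A : ℕ) : ZMod (2 ^ (2 * k))) ^ X
      = (X : ZMod (2 ^ (2 * k))) * (2 : ZMod (2 ^ (2 * k))) ^ k - 1 := by
    rw [hAker]
    have h1 : ((2 : ZMod (2 ^ (2 * k))) ^ k - 1)
        = -(1 + -((2 : ZMod (2 ^ (2 * k))) ^ k)) := by ring
    rw [h1, hXo.neg_pow,
      one_add_nilsq_pow (-((2 : ZMod (2 ^ (2 * k))) ^ k)) (by rw [neg_sq]; exact hNe)]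
    ring
  have hkey : ((2 ^ t : ℕ) : ZMod (2 ^ (2 * k)))
      = ((X * 2 ^ k : ℕ) : ZMod (2 ^ (2 * k))) := by
    rw [← h]
    push_cast
    rw [e3]; ring
  exact (ZMod.natCast_eq_natCast_iff _ _ _).mp hkey


private lemma pyth_factor {Q P y : ℕ} (hQodd : Q % 2 = 1) (hQpos : 0 < Q)
    (hsq : Q ^ 2 + 2 ^ y = P ^ 2) :
    ∃ t', 1 ≤ t' ∧ Q + 1 = 2 ^ t' ∧ P = Q + 2 ∧ y = t' + 2 := by
  have hQP : Q < P := by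
    by_contra hnot
    have h1 : P ^ 2 ≤ Q ^ 2 := Nat.pow_le_pow_left (by omega) 2
    have h2 : 0 < 2 ^ y := pow_pos (by norm_num) y
    omega
  have hfac : (P - Q) * (P + Q) = 2 ^ y := by
    zify [hQP.le]
    zify at hsq
    linear_combination - hsq
  have hd1 : (P - Q) ∣ 2 ^ y := ⟨P + Q, hfac.symm⟩
  have hd2 : (P + Q) ∣ 2 ^ y := ⟨P - Q, by rw [mul_comm]; exact hfac.symm⟩
  obtain ⟨s, hsle, hs⟩ := (Nat.dvd_prime_pow Nat.prime_two).mp hd1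
  obtain ⟨t, htle, ht⟩ := (Nat.dvd_prime_pow Nat.prime_two).mp hd2
  clear hd1 hd2 hsq hsle htle
  have hst : s + t = y := by
    have h1 : (2:ℕ) ^ (s + t) = 2 ^ y := by rw [pow_add, ← hs, ← ht]; exact hfac
    exact Nat.pow_right_injective (by norm_num) h1
  clear hfac
  have hPQ2 : P = Q + 2 ^ s := by omega
  have h2Q : 2 * Q + 2 ^ s = 2 ^ t := by omega
  have hs1 : s = 1 := by
    rcases Nat.eq_zero_or_pos s with h0 | h1
    · exfalso
      subst h0
      have e0 : (2:ℕ) ^ 0 = 1 := pow_zero 2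
      rcases Nat.eq_zero_or_pos t with h0' | h1'
      · subst h0'; omega
      · have het : (2:ℕ) ^ t = 2 * 2 ^ (t - 1) := by
          conv_lhs => rw [show t = (t-1)+1 by omega]
          rw [pow_succ]; ring
        omega
    · by_contra hne
      have hs2 : 2 ≤ s := by omega
      have hts : s < t := by
        have h1 : (2:ℕ) ^ s < 2 ^ t := by omega
        exact (Nat.pow_lt_pow_iff_right (by norm_num)).mp h1
      have hta : (2:ℕ) ^ t = 4 * 2 ^ (t - 2) := by
        conv_lhs => rw [show t = (t-2)+2 by omega]
        rw [pow_add]; ring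
      have hsa : (2:ℕ) ^ s = 4 * 2 ^ (s - 2) := by
        conv_lhs => rw [show s = (s-2)+2 by omega]
        rw [pow_add]; ring
      omega
  subst hs1
  have he1 : (2:ℕ) ^ 1 = 2 := pow_one 2
  have ht2 : 2 ≤ t := by
    rcases (by omega : 2 ≤ t ∨ t = 0 ∨ t = 1) with h | h | h
    · exact h
    · exfalso; rw [h] at h2Q; norm_num at h2Q; omega
    · exfalso; rw [h] at h2Q; norm_num at h2Q; omega
  obtain ⟨t', rfl⟩ : ∃ t', t = t' + 1 := ⟨t - 1, by omega⟩
  have hQ1 : Q + 1 = 2 ^ t' := by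
    have het : (2:ℕ) ^ (t' + 1) = 2 * 2 ^ t' := by rw [pow_succ]; ring
    omega
  exact ⟨t', by omega, hQ1, by omega, by omega⟩

private lemma no_even_pow {A X t' : ℕ} (hAodd : A % 2 = 1) (hA : 2 ≤ A) (hXpos : 0 < X)
    (hXe : X % 2 = 0) (h : A ^ X + 1 = 2 ^ t') : False := by
  obtain ⟨W, hW⟩ : ∃ w, X = w + w := ⟨X / 2, by omega⟩
  have hQsq : A ^ X = (A ^ W) ^ 2 := by rw [← pow_mul]; congr 1; omega
  have hAW : (A ^ W) % 2 = 1 := Nat.odd_iff.mp ((Nat.odd_iff.mpr hAodd).pow)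
  have h8 : A ^ X % 8 = 1 := by rw [hQsq]; exact odd_sq_mod8 hAW
  have hQpos : 2 ≤ A ^ X := by
    have := Nat.le_self_pow (show X ≠ 0 by omega) A
    omega
  have ht3 : t' < 3 := by
    by_contra h3
    have h8d : (8:ℕ) ∣ 2 ^ t' := by
      calc (8:ℕ) = 2 ^ 3 := by norm_num
      _ ∣ 2 ^ t' := pow_dvd_pow 2 (by omega)
    omega
  interval_cases t' <;> simp_all <;> omega

set_option maxHeartbeats 1000000 in
private lemma classify {k : ℕ} (hk7 : 7 ≤ k) (hk6 : k % 6 = 1) {x y z : ℕ}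
    (hx : 0 < x) (hy : 0 < y) (hz : 0 < z)
    (heq0 : (2 ^ k - 1) ^ x + 2 ^ y = (2 ^ k + 1) ^ z) :
    (x = 1 ∧ y = 1 ∧ z = 1) ∨ (x = 2 ∧ y = k + 2 ∧ z = 2) := by
  have hpk : 128 ≤ 2 ^ k := by
    calc (128:ℕ) = 2 ^ 7 := by norm_num
    _ ≤ 2 ^ k := Nat.pow_le_pow_right (by norm_num) hk7
  obtain ⟨A, hA_def⟩ : ∃ a, a = 2 ^ k - 1 := ⟨_, rfl⟩
  obtain ⟨C, hC_def⟩ : ∃ c, c = 2 ^ k + 1 := ⟨_, rfl⟩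
  rw [← hA_def, ← hC_def] at heq0
  have heq : A ^ x + 2 ^ y = C ^ z := heq0
  have hA1 : A + 1 = 2 ^ k := by omega
  have hAge : 127 ≤ A := by omega
  have hk9 : 2 ^ k % 9 = 2 := by
    have h := pow2_mod9 k
    rw [hk6] at h
    simpa using h
  have hA9 : A % 9 = 1 := by omega
  have hC9 : C % 9 = 3 := by omega
  have h2dvd : 2 ∣ 2 ^ k := dvd_pow_self 2 (by omega)
  have h4dvd : 4 ∣ 2 ^ k := by
    have : (2:ℕ) ^ 2 ∣ 2 ^ k := pow_dvd_pow 2 (by omega)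
    simpa using this
  have hAodd : A % 2 = 1 := by omega
  have hA4 : A % 4 = 3 := by omega
  have hApow9 : A ^ x % 9 = 1 := by
    rw [Nat.pow_mod, hA9]
    simp
  have hCz9 : 2 ≤ z → C ^ z % 9 = 0 := by
    intro hz2
    obtain ⟨c0, hc0⟩ : 3 ∣ C := by omega
    have h9 : (9:ℕ) ∣ C ^ z := by
      calc (9:ℕ) = 3 ^ 2 := by norm_num
      _ ∣ 3 ^ z := pow_dvd_pow 3 hz2
      _ ∣ C ^ z := by rw [hc0, mul_pow]; exact Dvd.intro _ rfl
    omega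
  rcases eq_or_lt_of_le (show 1 ≤ y from hy) with hy1 | hy2
  · -- y = 1
    left
    have hy1' : y = 1 := hy1.symm
    subst hy1'
    rw [pow_one] at heq
    have hz1 : z = 1 := by
      by_contra hz1
      have hz2 : 2 ≤ z := by omega
      have h9 := hCz9 hz2
      have h3 : (A ^ x + 2) % 9 = 3 := by
        rw [Nat.add_mod, hApow9]
      rw [heq] at h3
      omega
    subst hz1
    rw [pow_one] at heq
    have hAx : A ^ x = A ^ 1 := by rw [pow_one]; omega
    exact ⟨Nat.pow_right_injective (by omega) hAx, rfl, rfl⟩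
  · -- y ≥ 2
    right
    have hz2 : 2 ≤ z := by
      by_contra h
      have hz1 : z = 1 := by omega
      rw [hz1, pow_one] at heq
      have h1 : A ≤ A ^ x := Nat.le_self_pow (by omega) A
      have h2 : 4 ≤ 2 ^ y := by
        calc (4:ℕ) = 2 ^ 2 := by norm_num
        _ ≤ 2 ^ y := Nat.pow_le_pow_right (by norm_num) hy2
      omega
    have h9 := hCz9 hz2
    have h2y9 : 2 ^ y % 9 = 8 := by
      have h := Nat.add_mod (A ^ x) (2 ^ y) 9
      rw [heq, hApow9, h9] at h
      omega
    have hy6 : y % 6 = 3 := by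
      have hp := pow2_mod9 y
      have hp2 : 2 ^ (y % 6) % 9 = 8 := by omega
      have hlt : y % 6 < 6 := Nat.mod_lt _ (by norm_num)
      have hdec : ∀ r, r < 6 → 2 ^ r % 9 = 8 → r = 3 := by decide
      exact hdec _ hlt hp2
    -- x even
    have hCz4 : C ^ z % 4 = 1 := by
      have hC4 : C % 4 = 1 := by omega
      rw [Nat.pow_mod, hC4]
      simp
    have h2y4 : 2 ^ y % 4 = 0 := by
      have h : (4:ℕ) ∣ 2 ^ y := by
        have : (2:ℕ) ^ 2 ∣ 2 ^ y := pow_dvd_pow 2 hy2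
        simpa using this
      omega
    have hAx4 : A ^ x % 4 = 1 := by
      have h := Nat.add_mod (A ^ x) (2 ^ y) 4
      rw [heq, hCz4, h2y4] at h
      omega
    have hx2 : x % 2 = 0 := by
      by_contra h
      have hx1 : x % 2 = 1 := by omega
      have h3 : A ^ x % 4 = 3 := by
        rw [Nat.pow_mod, hA4, pow3_mod4, hx1]
        norm_num
      omega
    obtain ⟨X, hX⟩ : ∃ X, x = 2 * X := ⟨x / 2, by omega⟩
    have hXpos : 0 < X := by omega
    clear hApow9 hCz9 h9 h2y9 hCz4 h2y4 hAx4 hk9 hA9 hC9 h2dvd h4dvd heq0 hA_def hpk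
    rcases Nat.even_or_odd z with hze | hzo
    · -- z even : the main case
      obtain ⟨Z, hZ⟩ := hze
      have hZ1 : 1 ≤ Z := by omega
      have eA : A ^ x = (A ^ X) ^ 2 := by rw [← pow_mul, hX]; congr 1; omega
      have eC : C ^ z = (C ^ Z) ^ 2 := by rw [← pow_mul, hZ]; congr 1; omega
      have hQodd : A ^ X % 2 = 1 := Nat.odd_iff.mp ((Nat.odd_iff.mpr hAodd).pow)
      have hQpos : 0 < A ^ X := pow_pos (by omega) X
      have hsq : (A ^ X) ^ 2 + 2 ^ y = (C ^ Z) ^ 2 := by rw [← eA, ← eC]; exact heq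
      obtain ⟨t', ht'1, hQ1, hPQ, hy'⟩ := pyth_factor hQodd hQpos hsq
      clear hsq eA eC heq hy2 hz2 hy6
      rcases Nat.even_or_odd X with hXe | hXo
      · exact absurd (no_even_pow hAodd (by omega) hXpos (Nat.even_iff.mp hXe) hQ1) id
      · -- X odd: the solution (2, k+2, 2)
        have hXodd : X % 2 = 1 := Nat.odd_iff.mp hXo
        have hmod2 := modeq_aux2 hA1 hXodd hQ1
        have htk : t' = k := exp_eq_of_modeq (by omega) hXodd hmod2
        have hQA : A ^ X = A := by rw [htk] at hQ1; omega
        have hX1 : X = 1 := by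
          have hpow : A ^ X = A ^ 1 := by rw [pow_one]; omega
          exact Nat.pow_right_injective (by omega) hpow
        have hZis : Z = 1 := by
          have hpow : C ^ Z = C ^ 1 := by rw [pow_one]; omega
          exact Nat.pow_right_injective (by omega) hpow
        refine ⟨by omega, by omega, by omega⟩
    · -- z odd: contradiction
      exfalso
      have hmodeq := modeq_aux1 hA1 hC_def hx2 heq
      have hzw : (z + x) % 2 = 1 := by
        have h1 := Nat.odd_iff.mp hzo
        omega
      have hyk : y = k := exp_eq_of_modeq (by omega) hzw hmodeq
      omega


set_option maxHeartbeats 1000000 in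
/-- There are infinitely many triples `(a, b, c)` of integers with `a, b > 1`,
`gcd(a, b) = 1`, and `c` odd such that `a^x + b^y = c^z` has exactly two solutions in
positive integers `(x, y, z)`. -/
theorem infinitely_many_two_solution_triples :
    {t : ℕ × ℕ × ℕ | 1 < t.1 ∧ 1 < t.2.1 ∧ Nat.Coprime t.1 t.2.1 ∧ Odd t.2.2 ∧
      {p : ℕ × ℕ × ℕ | 0 < p.1 ∧ 0 < p.2.1 ∧ 0 < p.2.2 ∧
        t.1 ^ p.1 + t.2.1 ^ p.2.1 = t.2.2 ^ p.2.2}.encard = 2}.Infinite := by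
  apply Set.infinite_of_injective_forall_mem
    (f := fun j : ℕ => ((2 ^ (6 * j + 7) - 1 : ℕ), (2 : ℕ), (2 ^ (6 * j + 7) + 1 : ℕ)))

  · -- injective
    intro i j hij
    simp only [Prod.mk.injEq] at hij
    have h1 := hij.1
    have hi : (1:ℕ) ≤ 2 ^ (6 * i + 7) := Nat.one_le_two_pow
    have hj : (1:ℕ) ≤ 2 ^ (6 * j + 7) := Nat.one_le_two_pow
    have h2 : (2:ℕ) ^ (6 * i + 7) = 2 ^ (6 * j + 7) := by omega
    have h3 := Nat.pow_right_injective (by norm_num) h2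
    omega
  · -- membership
    intro j
    simp only [Set.mem_setOf_eq]
    have hk7 : 7 ≤ 6 * j + 7 := by omega
    have hk6 : (6 * j + 7) % 6 = 1 := by omega
    have hpk : 128 ≤ 2 ^ (6 * j + 7) := by
      calc (128:ℕ) = 2 ^ 7 := by norm_num
      _ ≤ 2 ^ (6 * j + 7) := Nat.pow_le_pow_right (by norm_num) hk7
    have h2dvd : 2 ∣ 2 ^ (6 * j + 7) := dvd_pow_self 2 (by omega)
    refine ⟨by omega, by norm_num, ?_, ?_, ?_⟩
    · -- coprime
      have hodd : ¬ (2 ∣ (2 ^ (6 * j + 7) - 1)) := by omega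
      exact (Nat.coprime_comm.mp ((Nat.Prime.coprime_iff_not_dvd Nat.prime_two).mpr hodd))
    · exact Nat.odd_iff.mpr (by omega)
    · have hset : {p : ℕ × ℕ × ℕ | 0 < p.1 ∧ 0 < p.2.1 ∧ 0 < p.2.2 ∧
          (2 ^ (6 * j + 7) - 1) ^ p.1 + 2 ^ p.2.1 = (2 ^ (6 * j + 7) + 1) ^ p.2.2} =
          {((1:ℕ), (1:ℕ), (1:ℕ)), ((2:ℕ), (6 * j + 7) + 2, (2:ℕ))} := by
        ext ⟨x, y, z⟩
        simp only [Set.mem_setOf_eq, Set.mem_insert_iff, Set.mem_singleton_iff, Prod.mk.injEq]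
        constructor
        · rintro ⟨hx, hy, hz, heq⟩
          rcases classify hk7 hk6 hx hy hz heq with ⟨h1, h2, h3⟩ | ⟨h1, h2, h3⟩
          · left; exact ⟨h1, h2, h3⟩
          · right; exact ⟨h1, h2, h3⟩
        · rintro (⟨rfl, rfl, rfl⟩ | ⟨rfl, rfl, rfl⟩)
          · refine ⟨one_pos, one_pos, one_pos, ?_⟩
            simp only [pow_one]
            omega
          · refine ⟨two_pos, by omega, two_pos, ?_⟩
            have h1 : (1:ℕ) ≤ 2 ^ (6 * j + 7) := Nat.one_le_two_pow
            zify [h1]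
            rw [pow_add]
            ring
      rw [hset]
      exact Set.encard_pair (by simp [Prod.ext_iff])
end

section
/- Let a and b be relatively prime integers both greater than 1 and let c be an odd integer greater than 1. Then there exist two pairs (e1, f1) and (e2, f2) in (ℤ/2ℤ) × (ℤ/2ℤ) such that every solution in positive integers (x, y, z) to a^x + b^y = c^z satisfies (x mod 2, y mod 2) = (e1, f1) or (x mod 2, y mod 2) = (e2, f2). In other words, all solutions occur in at most two parity classes. -/
private lemma zmod2_cases (u : ZMod 2) : u = 0 ∨ u = 1 := by
  revert u; decide

private lemma natCast_zmod_two_of_dvd {n : ℕ} (h : 2 ∣ n) : (n : ZMod 2) = 0 := by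
  obtain ⟨t, rfl⟩ := h
  rw [Nat.cast_mul, show ((2 : ℕ) : ZMod 2) = 0 by decide, zero_mul]

private lemma natCast_zmod_two_of_not_dvd {n : ℕ} (h : ¬ 2 ∣ n) : (n : ZMod 2) = 1 := by
  obtain ⟨t, ht⟩ : ∃ t, n = 2 * t + 1 := ⟨n / 2, by omega⟩
  subst ht
  rw [Nat.cast_add, Nat.cast_mul, show ((2 : ℕ) : ZMod 2) = 0 by decide, zero_mul,
    zero_add, Nat.cast_one]

/-- Let `a` and `b` be relatively prime integers both greater than 1 and let `c` be an odd
integer greater than 1. Then all solutions in positive integers of `a^x + b^y = c^z` occur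
in at most two parity classes `(x mod 2, y mod 2)`. -/
theorem at_most_two_parity_classes (a b c : ℕ) (ha : 1 < a) (hb : 1 < b)
    (hab : Nat.Coprime a b) (hc : 1 < c) (hcodd : Odd c) :
    ∃ e₁ f₁ e₂ f₂ : ZMod 2, ∀ x y z : ℕ, 0 < x → 0 < y → 0 < z →
      a ^ x + b ^ y = c ^ z →
      ((x : ZMod 2), (y : ZMod 2)) = (e₁, f₁) ∨ ((x : ZMod 2), (y : ZMod 2)) = (e₂, f₂) := by
  classical
  set p := c.minFac with hpdef
  have hp : p.Prime := Nat.minFac_prime (by omega)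
  have hpc : p ∣ c := Nat.minFac_dvd c
  have hp2 : p ≠ 2 := by
    intro h
    rw [h] at hpc
    obtain ⟨s, hs⟩ := hpc
    obtain ⟨t, ht⟩ := hcodd
    omega
  haveI : Fact p.Prime := ⟨hp⟩
  have hcp : (c : ZMod p) = 0 := (ZMod.natCast_eq_zero_iff c p).mpr hpc
  have hneg1 : (-1 : ZMod p) ≠ 1 := by
    intro h
    have h2 : ((2 : ℕ) : ZMod p) = 0 := by push_cast; linear_combination -h
    have hdvd := (ZMod.natCast_eq_zero_iff 2 p).mp h2
    exact hp2 ((Nat.prime_dvd_prime_iff_eq hp Nat.prime_two).mp hdvd)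
  -- vacuous cases: p ∣ a or p ∣ b
  by_cases hpa : p ∣ a
  · refine ⟨0, 0, 0, 0, fun x y z hx hy hz hxyz => False.elim ?_⟩
    have h0 : (a : ZMod p) ^ x + (b : ZMod p) ^ y = (c : ZMod p) ^ z := by
      exact_mod_cast congrArg (fun n : ℕ => (n : ZMod p)) hxyz
    have ha0 : (a : ZMod p) = 0 := (ZMod.natCast_eq_zero_iff a p).mpr hpa
    rw [hcp, zero_pow hz.ne', ha0, zero_pow hx.ne', zero_add] at h0
    have hb0 : (b : ZMod p) = 0 := pow_eq_zero_iff hy.ne' |>.mp h0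
    have hpb : p ∣ b := (ZMod.natCast_eq_zero_iff b p).mp hb0
    have hg : p ∣ Nat.gcd a b := Nat.dvd_gcd hpa hpb
    rw [hab] at hg
    exact (Nat.Prime.one_lt hp).ne' (Nat.dvd_one.mp hg)
  by_cases hpb : p ∣ b
  · refine ⟨0, 0, 0, 0, fun x y z hx hy hz hxyz => False.elim ?_⟩
    have h0 : (a : ZMod p) ^ x + (b : ZMod p) ^ y = (c : ZMod p) ^ z := by
      exact_mod_cast congrArg (fun n : ℕ => (n : ZMod p)) hxyz
    have hb0 : (b : ZMod p) = 0 := (ZMod.natCast_eq_zero_iff b p).mpr hpb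
    rw [hcp, zero_pow hz.ne', hb0, zero_pow hy.ne', add_zero] at h0
    have ha0 : (a : ZMod p) = 0 := pow_eq_zero_iff hx.ne' |>.mp h0
    exact hpa ((ZMod.natCast_eq_zero_iff a p).mp ha0)
  -- main case
  have ha0 : (a : ZMod p) ≠ 0 := fun h => hpa ((ZMod.natCast_eq_zero_iff a p).mp h)
  have hb0 : (b : ZMod p) ≠ 0 := fun h => hpb ((ZMod.natCast_eq_zero_iff b p).mp h)
  set m := (p - 1).factorization 2 with hm
  set T := ordCompl[2] (p - 1) with hT
  have hpne : p - 1 ≠ 0 := by have := hp.two_le; omega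
  have hT2 : ¬ 2 ∣ T := Nat.not_dvd_ordCompl Nat.prime_two hpne
  have hTodd : Odd T := Nat.odd_iff.mpr (by omega)
  have hmT : 2 ^ m * T = p - 1 := Nat.ordProj_mul_ordCompl_eq_self (p - 1) 2
  set A := (a : ZMod p) ^ T with hA
  set B := (b : ZMod p) ^ T with hB
  have hA1 : A ^ (2 ^ m) = 1 := by
    rw [hA, ← pow_mul, mul_comm T (2 ^ m), hmT]
    exact ZMod.pow_card_sub_one_eq_one ha0
  have hB1 : B ^ (2 ^ m) = 1 := by
    rw [hB, ← pow_mul, mul_comm T (2 ^ m), hmT]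
    exact ZMod.pow_card_sub_one_eq_one hb0
  obtain ⟨kA, hkAm, hordA⟩ := (Nat.dvd_prime_pow Nat.prime_two).mp (orderOf_dvd_of_pow_eq_one hA1)
  obtain ⟨kB, hkBm, hordB⟩ := (Nat.dvd_prime_pow Nat.prime_two).mp (orderOf_dvd_of_pow_eq_one hB1)
  -- key per-solution relation
  have key : ∀ x y z : ℕ, 0 < x → 0 < y → 0 < z → a ^ x + b ^ y = c ^ z →
      A ^ x = -(B ^ y) := by
    intro x y z hx hy hz hxyz
    have h0 : (a : ZMod p) ^ x + (b : ZMod p) ^ y = (c : ZMod p) ^ z := by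
      exact_mod_cast congrArg (fun n : ℕ => (n : ZMod p)) hxyz
    rw [hcp, zero_pow hz.ne'] at h0
    have hax : (a : ZMod p) ^ x = -((b : ZMod p) ^ y) := eq_neg_of_add_eq_zero_left h0
    calc A ^ x = ((a : ZMod p) ^ x) ^ T := by rw [hA, ← pow_mul, ← pow_mul, mul_comm]
    _ = (-((b : ZMod p) ^ y)) ^ T := by rw [hax]
    _ = -(((b : ZMod p) ^ y) ^ T) := hTodd.neg_pow _
    _ = -(B ^ y) := by rw [hB, ← pow_mul, ← pow_mul, mul_comm]
  -- helper: parity extraction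
  have extract : ∀ (U : ZMod p) (k n : ℕ), 2 ≤ k → orderOf U = 2 ^ k →
      U ^ (n * 2 ^ (k - 1)) = 1 → 2 ∣ n := by
    intro U k n hk hord hpow
    have hdvd : 2 ^ k ∣ n * 2 ^ (k - 1) := hord ▸ orderOf_dvd_of_pow_eq_one hpow
    obtain ⟨t, ht⟩ := hdvd
    have hks : (2 : ℕ) ^ k = 2 ^ (k - 1) * 2 := by
      rw [← pow_succ]; congr 1; omega
    rw [hks] at ht
    have hpos : 0 < (2 : ℕ) ^ (k - 1) := pow_pos (by norm_num) _
    have hnt : n * 2 ^ (k - 1) = (2 * t) * 2 ^ (k - 1) := by rw [ht]; ring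
    exact ⟨t, Nat.eq_of_mul_eq_mul_right hpos hnt⟩
  by_cases hsmall : kA ≤ 1 ∧ kB ≤ 1
  · -- A and B are ±1
    have hA2 : A ^ 2 = 1 := by
      refine orderOf_dvd_iff_pow_eq_one.mp ?_
      rw [hordA]
      exact dvd_trans (pow_dvd_pow 2 hsmall.1) (by norm_num)
    have hB2 : B ^ 2 = 1 := by
      refine orderOf_dvd_iff_pow_eq_one.mp ?_
      rw [hordB]
      exact dvd_trans (pow_dvd_pow 2 hsmall.2) (by norm_num)
    have hApm : A = 1 ∨ A = -1 := by
      have hmul : (A - 1) * (A + 1) = 0 := by linear_combination hA2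
      rcases mul_eq_zero.mp hmul with h | h
      · left; linear_combination h
      · right; linear_combination h
    have hBpm : B = 1 ∨ B = -1 := by
      have hmul : (B - 1) * (B + 1) = 0 := by linear_combination hB2
      rcases mul_eq_zero.mp hmul with h | h
      · left; linear_combination h
      · right; linear_combination h
    rcases hApm with hA' | hA' <;> rcases hBpm with hB' | hB'
    · -- A = 1, B = 1 : no solutions
      refine ⟨0, 0, 0, 0, fun x y z hx hy hz hxyz => False.elim ?_⟩
      have hk := key x y z hx hy hz hxyz
      rw [hA', hB', one_pow, one_pow] at hk
      exact hneg1 (by linear_combination -hk)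
    · -- A = 1, B = -1 : y odd
      refine ⟨0, 1, 1, 1, fun x y z hx hy hz hxyz => ?_⟩
      have hk := key x y z hx hy hz hxyz
      rw [hA', hB', one_pow] at hk
      have hyodd : ¬ 2 ∣ y := by
        intro h2y
        rw [(Nat.even_iff.mpr (by omega)).neg_one_pow] at hk
        exact hneg1 (by linear_combination -hk)
      have hy2 : (y : ZMod 2) = 1 := natCast_zmod_two_of_not_dvd hyodd
      rcases zmod2_cases (x : ZMod 2) with hx2 | hx2
      · left; rw [hx2, hy2]
      · right; rw [hx2, hy2]
    · -- A = -1, B = 1 : x odd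
      refine ⟨1, 0, 1, 1, fun x y z hx hy hz hxyz => ?_⟩
      have hk := key x y z hx hy hz hxyz
      rw [hA', hB', one_pow] at hk
      have hxodd : ¬ 2 ∣ x := by
        intro h2x
        rw [(Nat.even_iff.mpr (by omega)).neg_one_pow] at hk
        exact hneg1 (by linear_combination -hk)
      have hx2 : (x : ZMod 2) = 1 := natCast_zmod_two_of_not_dvd hxodd
      rcases zmod2_cases (y : ZMod 2) with hy2 | hy2
      · left; rw [hx2, hy2]
      · right; rw [hx2, hy2]
    · -- A = -1, B = -1 : x + y odd
      refine ⟨0, 1, 1, 0, fun x y z hx hy hz hxyz => ?_⟩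
      have hk := key x y z hx hy hz hxyz
      rw [hA', hB'] at hk
      by_cases h2x : 2 ∣ x <;> by_cases h2y : 2 ∣ y
      · exfalso
        rw [(Nat.even_iff.mpr (by omega)).neg_one_pow,
          (Nat.even_iff.mpr (by omega)).neg_one_pow] at hk
        exact hneg1 (by linear_combination -hk)
      · left
        rw [natCast_zmod_two_of_dvd h2x, natCast_zmod_two_of_not_dvd h2y]
      · right
        rw [natCast_zmod_two_of_not_dvd h2x, natCast_zmod_two_of_dvd h2y]
      · exfalso
        rw [(Nat.odd_iff.mpr (by omega)).neg_one_pow,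
          (Nat.odd_iff.mpr (by omega)).neg_one_pow] at hk
        exact hneg1 (by linear_combination hk)
  · push_neg at hsmall
    rcases Nat.lt_trichotomy kA kB with hlt | heq | hgt
    · -- kA < kB, kB ≥ 2 : y even
      have hkB2 : 2 ≤ kB := by
        by_contra h
        exact absurd (hsmall (by omega)) (by omega)
      refine ⟨0, 0, 1, 0, fun x y z hx hy hz hxyz => ?_⟩
      have hk := key x y z hx hy hz hxyz
      have hBy : B ^ y = -(A ^ x) := by linear_combination hk
      have hApow : A ^ (2 ^ (kB - 1)) = 1 := by
        refine orderOf_dvd_iff_pow_eq_one.mp ?_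
        rw [hordA]
        exact pow_dvd_pow 2 (by omega)
      have heven : Even (2 ^ (kB - 1)) := (Nat.even_pow' (by omega)).mpr even_two
      have hone : B ^ (y * 2 ^ (kB - 1)) = 1 := by
        rw [pow_mul, hBy, neg_pow, heven.neg_one_pow, one_mul, ← pow_mul,
          mul_comm x (2 ^ (kB - 1)), pow_mul, hApow, one_pow]
      have h2y : 2 ∣ y := extract B kB y hkB2 hordB hone
      have hy2 : (y : ZMod 2) = 0 := natCast_zmod_two_of_dvd h2y
      rcases zmod2_cases (x : ZMod 2) with hx2 | hx2
      · left; rw [hx2, hy2]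
      · right; rw [hx2, hy2]
    · -- kA = kB ≥ 2 : x ≡ y (mod 2)
      have hk2 : 2 ≤ kA := by
        rcases Nat.lt_or_ge kA 2 with h | h
        · exact absurd (hsmall (by omega)) (by omega)
        · exact h
      refine ⟨0, 0, 1, 1, fun x y z hx hy hz hxyz => ?_⟩
      have hk := key x y z hx hy hz hxyz
      have hBy : B ^ y = -(A ^ x) := by linear_combination hk
      have heven : Even (2 ^ (kA - 1)) := (Nat.even_pow' (by omega)).mpr even_two
      have hiff : (2 ∣ x) ↔ (2 ∣ y) := by
        constructor
        · intro h2x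
          have hApow : A ^ (x * 2 ^ (kA - 1)) = 1 := by
            refine orderOf_dvd_iff_pow_eq_one.mp ?_
            rw [hordA]
            obtain ⟨s, rfl⟩ := h2x
            exact ⟨s, by rw [show (2:ℕ) ^ kA = 2 ^ (kA - 1) * 2 by
              rw [← pow_succ]; congr 1; omega]; ring⟩
          have hone : B ^ (y * 2 ^ (kA - 1)) = 1 := by
            rw [pow_mul, hBy, neg_pow, heven.neg_one_pow, one_mul, ← pow_mul,
              mul_comm x (2 ^ (kA - 1)), mul_comm (2 ^ (kA - 1)) x, hApow]
          exact extract B kA y hk2 (heq ▸ hordB) hone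
        · intro h2y
          have hBpow : B ^ (y * 2 ^ (kA - 1)) = 1 := by
            refine orderOf_dvd_iff_pow_eq_one.mp ?_
            rw [hordB, ← heq]
            obtain ⟨s, rfl⟩ := h2y
            exact ⟨s, by rw [show (2:ℕ) ^ kA = 2 ^ (kA - 1) * 2 by
              rw [← pow_succ]; congr 1; omega]; ring⟩
          have hone : A ^ (x * 2 ^ (kA - 1)) = 1 := by
            rw [pow_mul, hk, neg_pow, heven.neg_one_pow, one_mul, ← pow_mul,
              mul_comm y (2 ^ (kA - 1)), mul_comm (2 ^ (kA - 1)) y, hBpow]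
          exact extract A kA x hk2 hordA hone
      by_cases h2x : 2 ∣ x
      · left
        rw [natCast_zmod_two_of_dvd h2x, natCast_zmod_two_of_dvd (hiff.mp h2x)]
      · right
        have h2y : ¬ 2 ∣ y := fun h => h2x (hiff.mpr h)
        rw [natCast_zmod_two_of_not_dvd h2x, natCast_zmod_two_of_not_dvd h2y]
    · -- kA > kB, kA ≥ 2 : x even
      have hkA2 : 2 ≤ kA := by
        by_contra h
        exact absurd (hsmall (by omega)) (by omega)
      refine ⟨0, 0, 0, 1, fun x y z hx hy hz hxyz => ?_⟩
      have hk := key x y z hx hy hz hxyz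
      have hBpow : B ^ (2 ^ (kA - 1)) = 1 := by
        refine orderOf_dvd_iff_pow_eq_one.mp ?_
        rw [hordB]
        exact pow_dvd_pow 2 (by omega)
      have heven : Even (2 ^ (kA - 1)) := (Nat.even_pow' (by omega)).mpr even_two
      have hone : A ^ (x * 2 ^ (kA - 1)) = 1 := by
        rw [pow_mul, hk, neg_pow, heven.neg_one_pow, one_mul, ← pow_mul,
          mul_comm y (2 ^ (kA - 1)), pow_mul, hBpow, one_pow]
      have h2x : 2 ∣ x := extract A kA x hkA2 hordA hone
      have hx2 : (x : ZMod 2) = 0 := natCast_zmod_two_of_dvd h2x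
      rcases zmod2_cases (y : ZMod 2) with hy2 | hy2
      · left; rw [hx2, hy2]
      · right; rw [hx2, hy2]
end

section
/- Let p be an odd prime and let a and b be integers not divisible by p. Then there exist two pairs (e1, f1) and (e2, f2) in (ℤ/2ℤ) × (ℤ/2ℤ) such that every pair of positive integers (x, y) with a^x ≡ -b^y (mod p) satisfies (x mod 2, y mod 2) = (e1, f1) or (x mod 2, y mod 2) = (e2, f2). -/
private lemma zmod2_eq_of_ne : ∀ a b c : ZMod 2, a ≠ c → b ≠ c → a = b := by decide

private lemma key_parity (m : ℤ) (hm : ¬ (2:ℤ) ∣ m) :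
    ∀ t : ℕ, 1 ≤ t → ∀ α β : ℤ,
    (∀ x y x' y' : ℤ,
        (2^t * m) ∣ (α*x - 2^(t-1)*m - β*y) →
        (2^t * m) ∣ (α*x' - 2^(t-1)*m - β*y') →
        (2:ℤ) ∣ (y - y') → (2:ℤ) ∣ (x - x'))
  ∨ (∀ x y x' y' : ℤ,
        (2^t * m) ∣ (α*x - 2^(t-1)*m - β*y) →
        (2^t * m) ∣ (α*x' - 2^(t-1)*m - β*y') →
        (2:ℤ) ∣ (x - x') → (2:ℤ) ∣ (y - y')) := by
  intro t
  induction t with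
  | zero => omega
  | succ t ih =>
    intro _ α β
    simp only [Nat.add_sub_cancel]
    have hdvd2 : (2:ℤ) ∣ 2^(t+1) * m :=
      Dvd.dvd.mul_right (dvd_pow_self 2 (Nat.succ_ne_zero t)) m
    by_cases hα : (2:ℤ) ∣ α
    · by_cases hβ : (2:ℤ) ∣ β
      · rcases Nat.eq_zero_or_pos t with ht0 | ht1
        · subst ht0
          left
          intro x y x' y' h1 _ _
          exfalso
          norm_num at h1
          have h2 : (2:ℤ) ∣ α*x - m - β*y := dvd_trans ⟨m, rfl⟩ h1
          obtain ⟨α', rfl⟩ := hα; obtain ⟨β', rfl⟩ := hβ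
          obtain ⟨c, hc⟩ := h2
          exact hm ⟨α' * x - β' * y - c, by linarith⟩
        · obtain ⟨α', rfl⟩ := hα
          obtain ⟨β', rfl⟩ := hβ
          have hred : ∀ x y : ℤ, (2^(t+1) * m) ∣ ((2*α')*x - 2^t*m - (2*β')*y) →
              (2^t * m) ∣ (α'*x - 2^(t-1)*m - β'*y) := by
            intro x y h
            have h2 : (2 * (2^t * m)) ∣ 2 * (α'*x - 2^(t-1)*m - β'*y) := by
              convert h using 1
              · ring
              · have ht : (2:ℤ)^t = 2 * 2^(t-1) := by
                  conv_lhs => rw [show t = (t-1)+1 by omega]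
                  ring
                rw [ht]; ring
            exact (mul_dvd_mul_iff_left (two_ne_zero)).mp h2
          rcases ih ht1 α' β' with H | H
          · left
            intro x y x' y' h1 h2 hy
            exact H x y x' y' (hred x y h1) (hred x' y' h2) hy
          · right
            intro x y x' y' h1 h2 hx
            exact H x y x' y' (hred x y h1) (hred x' y' h2) hx
      · right
        intro x y x' y' h1 h2 hx
        have h3 : (2:ℤ) ∣ (α*x - 2^t*m - β*y) - (α*x' - 2^t*m - β*y') :=
          dvd_sub (hdvd2.trans h1) (hdvd2.trans h2)
        have h4 : (2:ℤ) ∣ β*(y - y') := by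
          have he : β*(y-y') = -((α*x - 2^t*m - β*y) - (α*x' - 2^t*m - β*y')) + α*(x-x') := by
            ring
          rw [he]; exact dvd_add (dvd_neg.mpr h3) (Dvd.dvd.mul_left hx α)
        rcases (Int.prime_two.dvd_mul.mp h4) with h | h
        · exact absurd h hβ
        · exact h
    · left
      intro x y x' y' h1 h2 hy
      have h3 : (2:ℤ) ∣ (α*x - 2^t*m - β*y) - (α*x' - 2^t*m - β*y') :=
        dvd_sub (hdvd2.trans h1) (hdvd2.trans h2)
      have h4 : (2:ℤ) ∣ α*(x - x') := by
        have he : α*(x-x') = ((α*x - 2^t*m - β*y) - (α*x' - 2^t*m - β*y')) + β*(y-y') := by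
          ring
        rw [he]; exact dvd_add h3 (Dvd.dvd.mul_left hy β)
      rcases (Int.prime_two.dvd_mul.mp h4) with h | h
      · exact absurd h hα
      · exact h

private lemma two_classes_helper (S : ℕ → ℕ → Prop)
    (H : ∀ x y x' y', S x y → S x' y' →
      (y : ZMod 2) = (y' : ZMod 2) → (x : ZMod 2) = (x' : ZMod 2)) :
    ∃ e₁ f₁ e₂ f₂ : ZMod 2, ∀ x y, S x y →
      ((x : ZMod 2), (y : ZMod 2)) = (e₁, f₁) ∨ ((x : ZMod 2), (y : ZMod 2)) = (e₂, f₂) := by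
  by_cases hex : ∃ x y, S x y
  · obtain ⟨x0, y0, h0⟩ := hex
    by_cases hex2 : ∃ x y, S x y ∧ (y : ZMod 2) ≠ (y0 : ZMod 2)
    · obtain ⟨x1, y1, h1, hy1⟩ := hex2
      refine ⟨(x0 : ZMod 2), (y0 : ZMod 2), (x1 : ZMod 2), (y1 : ZMod 2), fun x y hS => ?_⟩
      by_cases hy : (y : ZMod 2) = (y0 : ZMod 2)
      · left; rw [Prod.mk.injEq]; exact ⟨H _ _ _ _ hS h0 hy, hy⟩
      · right
        have hyy1 : (y : ZMod 2) = (y1 : ZMod 2) := zmod2_eq_of_ne _ _ _ hy hy1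
        rw [Prod.mk.injEq]; exact ⟨H _ _ _ _ hS h1 hyy1, hyy1⟩
    · push_neg at hex2
      refine ⟨(x0 : ZMod 2), (y0 : ZMod 2), (x0 : ZMod 2), (y0 : ZMod 2), fun x y hS => ?_⟩
      left
      have hy := hex2 x y hS
      rw [Prod.mk.injEq]; exact ⟨H _ _ _ _ hS h0 hy, hy⟩
  · exact ⟨0, 0, 0, 0, fun x y hS => absurd ⟨x, y, hS⟩ hex⟩

/-- Let `p` be an odd prime and let `a` and `b` be integers not divisible by `p`. Then
there are at most two parity classes `(x mod 2, y mod 2)` of pairs of positive integers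
`(x, y)` with `a^x ≡ -b^y (mod p)`. -/
theorem congruence_two_parity_classes (p : ℕ) (hp : p.Prime) (hpodd : Odd p)
    (a b : ℤ) (ha : ¬ (p : ℤ) ∣ a) (hb : ¬ (p : ℤ) ∣ b) :
    ∃ e₁ f₁ e₂ f₂ : ZMod 2, ∀ x y : ℕ, 0 < x → 0 < y →
      a ^ x ≡ -(b ^ y) [ZMOD p] →
      ((x : ZMod 2), (y : ZMod 2)) = (e₁, f₁) ∨ ((x : ZMod 2), (y : ZMod 2)) = (e₂, f₂) := by
  haveI : Fact p.Prime := ⟨hp⟩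
  have hp3 : 3 ≤ p := by
    have h2 := hp.two_le
    rcases hpodd with ⟨k, hk⟩
    omega
  set n : ℕ := p - 1 with hn
  have hn2 : 2 ∣ n := by rcases hpodd with ⟨k, hk⟩; omega
  have hnpos : 0 < n := by omega
  -- units
  have hA : ((a : ZMod p)) ≠ 0 := by
    rw [Ne, ZMod.intCast_zmod_eq_zero_iff_dvd]; exact ha
  have hB : ((b : ZMod p)) ≠ 0 := by
    rw [Ne, ZMod.intCast_zmod_eq_zero_iff_dvd]; exact hb
  set U : (ZMod p)ˣ := Units.mk0 _ hA with hU
  set V : (ZMod p)ˣ := Units.mk0 _ hB with hV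
  obtain ⟨g, hg⟩ := IsCyclic.exists_generator (α := (ZMod p)ˣ)
  have horder : orderOf g = n := by
    rw [orderOf_eq_card_of_forall_mem_zpowers hg, Nat.card_eq_fintype_card, ZMod.card_units]
  obtain ⟨α, hα'⟩ := hg U
  obtain ⟨β, hβ'⟩ := hg V
  have hα : g ^ α = U := hα'
  have hβ : g ^ β = V := hβ'
  -- g ^ (n / 2) = -1
  have hhalf : g ^ (n / 2) = -1 := by
    have hsq : (g ^ (n / 2)) ^ 2 = 1 := by
      rw [← pow_mul, Nat.div_mul_cancel hn2, ← horder, pow_orderOf_eq_one]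
    have hne1 : g ^ (n / 2) ≠ 1 := by
      intro h
      have hd := orderOf_dvd_of_pow_eq_one h
      rw [horder] at hd
      have := Nat.le_of_dvd (by omega) hd
      omega
    have hval : ((g ^ (n / 2) : (ZMod p)ˣ) : ZMod p) ^ 2 = 1 := by
      rw [← Units.val_pow_eq_pow_val, hsq, Units.val_one]
    rcases sq_eq_one_iff.mp hval with h | h
    · exact absurd (Units.ext h) hne1
    · exact Units.ext (by rw [h, Units.val_neg, Units.val_one])
  -- every solution gives a divisibility
  have hdvd : ∀ x y : ℕ, a ^ x ≡ -(b ^ y) [ZMOD p] →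
      ((n : ℤ)) ∣ (α * x - ((n / 2 : ℕ) : ℤ) - β * y) := by
    intro x y hxy
    have hcast : ((a : ZMod p)) ^ x = -(((b : ZMod p)) ^ y) := by
      have := (ZMod.intCast_eq_intCast_iff _ _ _).mpr hxy
      push_cast at this
      exact this
    have hunits : U ^ x = -(V ^ y) := by
      apply Units.ext
      rw [Units.val_pow_eq_pow_val, Units.val_neg, Units.val_pow_eq_pow_val]
      exact hcast
    have hneg : (-(V ^ y) : (ZMod p)ˣ) = g ^ (n / 2) * V ^ y := by
      rw [hhalf]; simp
    have hzpow : g ^ (α * (x : ℤ)) = g ^ (((n / 2 : ℕ) : ℤ) + β * (y : ℤ)) := by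
      calc g ^ (α * (x : ℤ)) = (g ^ α) ^ (x : ℤ) := by rw [zpow_mul]
        _ = U ^ x := by rw [hα, zpow_natCast]
        _ = g ^ (n / 2) * V ^ y := by rw [hunits, hneg]
        _ = g ^ (((n / 2 : ℕ)) : ℤ) * (g ^ β) ^ (y : ℤ) := by
              rw [hβ, zpow_natCast, zpow_natCast]
        _ = g ^ ((((n / 2 : ℕ)) : ℤ) + β * (y : ℤ)) := by rw [zpow_add, zpow_mul]
    have := orderOf_dvd_sub_iff_zpow_eq_zpow.mpr hzpow
    rw [horder] at this
    have he : α * (x : ℤ) - (((n / 2 : ℕ) : ℤ) + β * (y : ℤ))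
        = α * x - ((n / 2 : ℕ) : ℤ) - β * y := by ring
    rwa [he] at this
  -- decompose n = 2^t * m with m odd
  obtain ⟨t, m, hm, hnm⟩ := Nat.exists_eq_pow_mul_and_not_dvd (n := n) (by omega) 2
    (by norm_num)
  have ht1 : 1 ≤ t := by
    rcases Nat.eq_zero_or_pos t with h0 | h1
    · exfalso; apply hm; rw [h0, pow_zero, one_mul] at hnm; rw [← hnm]; exact hn2
    · exact h1
  have hhalfn : n / 2 = 2 ^ (t - 1) * m := by
    rw [hnm, show t = (t - 1) + 1 by omega, pow_succ]
    rw [show (2:ℕ) ^ (t-1) * 2 * m = 2 * (2 ^ (t-1) * m) by ring]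
    exact Nat.mul_div_cancel_left _ (by norm_num)
  have hmint : ¬ (2:ℤ) ∣ (m : ℤ) := by exact_mod_cast hm
  -- translate divisibility to the key lemma's shape
  have hdvd' : ∀ x y : ℕ, a ^ x ≡ -(b ^ y) [ZMOD p] →
      ((2:ℤ)^t * (m:ℤ)) ∣ (α * x - 2^(t-1) * (m:ℤ) - β * y) := by
    intro x y hxy
    have h := hdvd x y hxy
    have h1 : ((n : ℕ) : ℤ) = 2^t * (m : ℤ) := by rw [hnm]; push_cast; ring
    have h2 : (((n / 2 : ℕ)) : ℤ) = 2^(t-1) * (m : ℤ) := by rw [hhalfn]; push_cast; ring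
    rw [h1, h2] at h
    exact h
  -- parity of solutions (ZMod 2 form of divisibility)
  have hpar : ∀ u v : ℕ, (2:ℤ) ∣ ((u : ℤ) - (v : ℤ)) ↔ (u : ZMod 2) = (v : ZMod 2) := by
    intro u v
    rw [ZMod.natCast_eq_natCast_iff, Nat.modEq_iff_dvd]
    constructor
    · intro h; omega
    · intro h; omega
  rcases key_parity (m : ℤ) hmint t ht1 α β with H | H
  · obtain ⟨e₁, f₁, e₂, f₂, hcl⟩ := two_classes_helper
      (fun x y => 0 < x ∧ 0 < y ∧ a ^ x ≡ -(b ^ y) [ZMOD p])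
      (by
        rintro x y x' y' ⟨-, -, hs⟩ ⟨-, -, hs'⟩ hyy
        exact (hpar x x').mp
          (H x y x' y' (hdvd' x y hs) (hdvd' x' y' hs') ((hpar y y').mpr hyy)))
    exact ⟨e₁, f₁, e₂, f₂, fun x y hx hy hs => hcl x y ⟨hx, hy, hs⟩⟩
  · obtain ⟨e₁, f₁, e₂, f₂, hcl⟩ := two_classes_helper
      (fun y x => 0 < x ∧ 0 < y ∧ a ^ x ≡ -(b ^ y) [ZMOD p])
      (by
        rintro y x y' x' ⟨-, -, hs⟩ ⟨-, -, hs'⟩ hxx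
        exact (hpar y y').mp
          (H x y x' y' (hdvd' x y hs) (hdvd' x' y' hs') ((hpar x x').mpr hxx)))
    refine ⟨f₁, e₁, f₂, e₂, fun x y hx hy hs => ?_⟩
    rcases hcl y x ⟨hx, hy, hs⟩ with h | h
    · exact Or.inl (Prod.ext_iff.mpr ⟨(Prod.ext_iff.mp h).2, (Prod.ext_iff.mp h).1⟩)
    · exact Or.inr (Prod.ext_iff.mpr ⟨(Prod.ext_iff.mp h).2, (Prod.ext_iff.mp h).1⟩)
end

section
/- Let m be a positive even integer and let r and s be integers. Then there exist two pairs (e1, f1) and (e2, f2) in (ℤ/2ℤ) × (ℤ/2ℤ) such that every pair of integers (x, y) satisfying r*x ≡ m/2 + s*y (mod m) has (x mod 2, y mod 2) equal to (e1, f1) or (e2, f2). -/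
lemma zmod2_cases_s6 : ∀ a : ZMod 2, a = 0 ∨ a = 1 := by decide

lemma aux_parity : ∀ N : ℕ, ∀ m : ℤ, m.natAbs ≤ N → 0 < m → Even m → ∀ r s : ℤ,
    ∃ e₁ f₁ e₂ f₂ : ZMod 2, ∀ x y : ℤ, r * x ≡ m / 2 + s * y [ZMOD m] →
      ((x : ZMod 2), (y : ZMod 2)) = (e₁, f₁) ∨ ((x : ZMod 2), (y : ZMod 2)) = (e₂, f₂) := by
  intro N
  induction N with
  | zero => intro m hle hm _; omega
  | succ N ih =>
    intro m hle hm hme r s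
    obtain ⟨n, hn⟩ := hme
    have hm2 : m = 2 * n := by omega
    have hdiv : m / 2 = n := by omega
    simp only [hdiv]
    have h2m : (2 : ℤ) ∣ m := ⟨n, hm2⟩
    by_cases hr : (2 : ℤ) ∣ r
    · by_cases hs : (2 : ℤ) ∣ s
      · by_cases hn2 : (2 : ℤ) ∣ n
        · -- recurse
          obtain ⟨r', hr'⟩ := hr
          obtain ⟨s', hs'⟩ := hs
          obtain ⟨n', hn'⟩ := hn2
          obtain ⟨e₁, f₁, e₂, f₂, hspec⟩ := ih n (by omega) (by omega) ⟨n', by omega⟩ r' s'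
          have hdiv' : n / 2 = n' := by omega
          refine ⟨e₁, f₁, e₂, f₂, fun x y h => ?_⟩
          apply hspec x y
          rw [hdiv']
          have hd : m ∣ (n + s * y) - r * x := Int.ModEq.dvd h
          obtain ⟨c, hc⟩ := hd
          have key : (n' + s' * y) - r' * x = n * c := by
            rw [hm2] at hc; subst hr'; subst hs'; subst hn'; linarith
          exact (Int.modEq_iff_dvd.mpr ⟨c, key⟩)
        · -- no solutions: n odd, r s even
          refine ⟨0, 0, 0, 0, fun x y h => (hn2 ?_).elim⟩
          have h2 : r * x ≡ (n + s * y) [ZMOD 2] := h.of_dvd h2m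
          have hd : (2 : ℤ) ∣ (n + s * y) - r * x := Int.ModEq.dvd h2
          have h1 : (2 : ℤ) ∣ s * y := hs.mul_right y
          have h3 : (2 : ℤ) ∣ r * x := hr.mul_right x
          have h4 := dvd_add (dvd_sub hd h1) h3
          have h5 : (n + s * y - r * x) - s * y + r * x = n := by ring
          rwa [h5] at h4
      · -- s odd: y parity fixed
        refine ⟨0, ((-n : ℤ) : ZMod 2), 1, ((-n : ℤ) : ZMod 2), fun x y h => ?_⟩
        have h2 : r * x ≡ n + s * y [ZMOD 2] := h.of_dvd h2m
        have hcast : ((r * x : ℤ) : ZMod 2) = ((n + s * y : ℤ) : ZMod 2) :=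
          (ZMod.intCast_eq_intCast_iff _ _ _).mpr h2
        have hr0 : ((r : ℤ) : ZMod 2) = 0 := by
          have : r ≡ 0 [ZMOD 2] := Int.modEq_zero_iff_dvd.mpr hr
          simpa using (ZMod.intCast_eq_intCast_iff _ _ _).mpr this
        have hs1 : ((s : ℤ) : ZMod 2) = 1 := by
          have : s ≡ 1 [ZMOD 2] := by unfold Int.ModEq; omega
          simpa using (ZMod.intCast_eq_intCast_iff _ _ _).mpr this
        push_cast at hcast
        rw [hr0, hs1] at hcast
        have hy : ((y : ZMod 2)) = ((-n : ℤ) : ZMod 2) := by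
          push_cast
          linear_combination -hcast
        rcases zmod2_cases_s6 (x : ZMod 2) with hx | hx
        · left; rw [hx, hy]
        · right; rw [hx, hy]
    · -- r odd: x ≡ n + s*y mod 2
      refine ⟨((n : ℤ) : ZMod 2), 0, ((n + s : ℤ) : ZMod 2), 1, fun x y h => ?_⟩
      have h2 : r * x ≡ n + s * y [ZMOD 2] := h.of_dvd h2m
      have hcast : ((r * x : ℤ) : ZMod 2) = ((n + s * y : ℤ) : ZMod 2) :=
        (ZMod.intCast_eq_intCast_iff _ _ _).mpr h2
      have hr1 : ((r : ℤ) : ZMod 2) = 1 := by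
        have : r ≡ 1 [ZMOD 2] := by unfold Int.ModEq; omega
        simpa using (ZMod.intCast_eq_intCast_iff _ _ _).mpr this
      push_cast at hcast
      rw [hr1, one_mul] at hcast
      rcases zmod2_cases_s6 (y : ZMod 2) with hy | hy
      · left
        simp only [Prod.mk.injEq]
        refine ⟨?_, hy⟩
        rw [hcast, hy]; ring
      · right
        simp only [Prod.mk.injEq]
        refine ⟨?_, hy⟩
        rw [hcast, hy]; push_cast; ring


/-- Let `m` be a positive even integer and let `r` and `s` be integers. Then the pairs of
integers `(x, y)` satisfying `r*x ≡ m/2 + s*y (mod m)` occur in at most two parity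
classes `(x mod 2, y mod 2)`. -/
theorem linear_congruence_two_parity_classes (m : ℤ) (hm : 0 < m) (hmeven : Even m)
    (r s : ℤ) :
    ∃ e₁ f₁ e₂ f₂ : ZMod 2, ∀ x y : ℤ, r * x ≡ m / 2 + s * y [ZMOD m] →
      ((x : ZMod 2), (y : ZMod 2)) = (e₁, f₁) ∨ ((x : ZMod 2), (y : ZMod 2)) = (e₂, f₂) := by
  exact aux_parity m.natAbs m le_rfl hm hmeven r s
end

section
/- Let a and b be relatively prime integers both greater than 1 and let c be an odd integer greater than 1. Suppose the equation a^x + b^y = c^z has two solutions in positive integers (x1, y1, z1) and (x2, y2, z2) that lie in different parity classes (i.e., x1 ≢ x2 (mod 2) or y1 ≢ y2 (mod 2)). Then there exists g ∈ {a, b} such that the multiplicative order u of g modulo c is even and g^(u/2) ≡ -1 (mod c). -/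
lemma sq_one_pow_odd {G : Type*} [Monoid G] {ε : G} (h : ε ^ 2 = 1) {m : ℕ}
    (hm : Odd m) : ε ^ m = ε := by
  obtain ⟨t, ht⟩ := hm
  subst ht
  rw [pow_add, pow_mul, h, one_pow, pow_one, one_mul]

lemma aux_zpowers {G : Type*} [CommGroup G] (A B ε : G) (e : ℕ)
    (hA : orderOf A ∣ 2 ^ e) (x₁ y₁ x₂ y₂ : ℕ)
    (h1 : A ^ x₁ = ε * B ^ y₁) (h2 : A ^ x₂ = ε * B ^ y₂)
    (hx : x₁ % 2 ≠ x₂ % 2) : ε ∈ Subgroup.zpowers B := by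
  wlog hle : x₂ ≤ x₁ generalizing x₁ y₁ x₂ y₂
  · exact this x₂ y₂ x₁ y₁ h2 h1 (Ne.symm hx) (by omega)
  set d := x₁ - x₂ with hd_def
  have hd : Odd d := by rw [Nat.odd_iff]; omega
  have hAd : A ^ d ∈ Subgroup.zpowers B := by
    have key : A ^ d * A ^ x₂ = A ^ x₁ := by rw [← pow_add]; congr 1; omega
    refine ⟨(y₁ : ℤ) - (y₂ : ℤ), ?_⟩
    have hthis : A ^ d = A ^ x₁ * (A ^ x₂)⁻¹ := by rw [← key]; group
    show B ^ ((y₁ : ℤ) - (y₂ : ℤ)) = A ^ d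
    rw [hthis, h1, h2, zpow_sub, zpow_natCast, zpow_natCast]
    rw [mul_inv, mul_mul_mul_comm, mul_inv_cancel, one_mul]
  have hcop : Nat.Coprime d (orderOf A) :=
    Nat.Coprime.coprime_dvd_right hA
      ((hd.coprime_two_left.symm).pow_right e)
  -- Bezout: A ∈ zpowers (A ^ d)
  have hAz : A ∈ Subgroup.zpowers B := by
    have hbez : (1 : ℤ) = d * Nat.gcdA d (orderOf A) + orderOf A * Nat.gcdB d (orderOf A) := by
      have := Nat.gcd_eq_gcd_ab d (orderOf A)
      rwa [hcop, Nat.cast_one] at this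
    have hAu : A ^ ((orderOf A : ℤ)) = 1 := by
      rw [zpow_natCast]; exact pow_orderOf_eq_one A
    have : A = (A ^ d) ^ (Nat.gcdA d (orderOf A)) := by
      conv_lhs => rw [← zpow_one A, hbez]
      rw [zpow_add, zpow_mul, zpow_mul, hAu, one_zpow, mul_one, zpow_natCast]
    rw [this]
    exact Subgroup.zpow_mem _ hAd _
  have : ε = A ^ x₁ * (B ^ y₁)⁻¹ := by rw [h1]; group
  rw [this]
  exact Subgroup.mul_mem _ (Subgroup.pow_mem _ hAz _)
    (Subgroup.inv_mem _ (Subgroup.pow_mem _ (Subgroup.mem_zpowers B) _))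

lemma aux_order {G : Type*} [Group G] {B ε : G} (hord : 0 < orderOf B)
    (hε2 : ε ^ 2 = 1) (hε1 : ε ≠ 1) (h : ε ∈ Subgroup.zpowers B) :
    Even (orderOf B) ∧ B ^ (orderOf B / 2) = ε := by
  obtain ⟨j, hj⟩ := Subgroup.mem_zpowers_iff.mp h
  set u := orderOf B with hu_def
  have hBu : B ^ (u : ℤ) = 1 := by rw [zpow_natCast]; exact pow_orderOf_eq_one B
  have hmod : B ^ (j % (u : ℤ)) = ε := by
    have hsplit : (u : ℤ) * (j / (u : ℤ)) + j % (u : ℤ) = j := Int.mul_ediv_add_emod j u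
    calc B ^ (j % (u : ℤ)) = B ^ ((u:ℤ) * (j / (u:ℤ)) + j % (u:ℤ)) * ((B ^ ((u:ℤ) * (j / (u:ℤ)))))⁻¹ := by
          rw [zpow_add]; group
      _ = ε := by rw [hsplit, hj, zpow_mul, hBu, one_zpow, inv_one, mul_one]
  have hk0 : 0 ≤ j % (u : ℤ) := Int.emod_nonneg j (by exact_mod_cast hord.ne')
  set k := (j % (u : ℤ)).toNat with hk_def
  have hk : B ^ k = ε := by
    rw [← zpow_natCast, hk_def, Int.toNat_of_nonneg hk0]; exact hmod
  have h2k : B ^ (2 * k) = 1 := by rw [mul_comm, pow_mul, hk, hε2]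
  have hdvd : u ∣ 2 * k := orderOf_dvd_of_pow_eq_one h2k
  have hueven : Even u := by
    by_contra hodd
    have hcop : Nat.Coprime u 2 := Odd.coprime_two_right (Nat.odd_iff.mpr (by
      rcases Nat.even_or_odd u with he | ho
      · exact absurd he hodd
      · exact Nat.odd_iff.mp ho))
    have : u ∣ k := (Nat.Coprime.dvd_of_dvd_mul_left hcop) hdvd
    exact hε1 (by rw [← hk]; exact orderOf_dvd_iff_pow_eq_one.mp this)
  obtain ⟨w, hw⟩ := hueven
  have hwdvd : w ∣ k := by
    have h2w : 2 * w ∣ 2 * k := by rw [show 2 * w = u by omega]; exact hdvd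
    exact (Nat.mul_dvd_mul_iff_left (by norm_num : 0 < 2)).mp h2w
  obtain ⟨s, hs⟩ := hwdvd
  have hBw2 : (B ^ w) ^ 2 = 1 := by
    rw [← pow_mul, show w * 2 = u by omega]; exact pow_orderOf_eq_one B
  have hsodd : Odd s := by
    by_contra hse
    have hse : Even s := Nat.not_odd_iff_even.mp hse
    obtain ⟨t, ht⟩ := hse
    have : B ^ k = 1 := by
      rw [hs, ht, show w * (t + t) = w * 2 * t by ring, pow_mul, pow_mul, hBw2, one_pow]
    exact hε1 (by rw [← hk, this])
  have hfin : B ^ w = ε := by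
    rw [← sq_one_pow_odd hBw2 hsodd, ← pow_mul, ← hs, hk]
  exact ⟨⟨w, hw⟩, by rw [show u / 2 = w by omega, hfin]⟩

lemma coprime_of_eq {a b c : ℕ} (hab : Nat.Coprime a b) (x y z : ℕ)
    (hx : 0 < x) (hz : 0 < z) (heq : a ^ x + b ^ y = c ^ z) : Nat.Coprime a c := by
  have hdvd_c : Nat.gcd a c ∣ c ^ z := dvd_pow (Nat.gcd_dvd_right a c) hz.ne'
  have hdvd_a : Nat.gcd a c ∣ a ^ x := dvd_pow (Nat.gcd_dvd_left a c) hx.ne'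
  have h1 : Nat.gcd a c ∣ b ^ y := by
    have hby : b ^ y = c ^ z - a ^ x := by omega
    rw [hby]; exact Nat.dvd_sub hdvd_c hdvd_a
  have h2 : Nat.Coprime (Nat.gcd a c) (b ^ y) :=
    Nat.Coprime.pow_right _ (Nat.Coprime.coprime_dvd_left (Nat.gcd_dvd_left a c) hab)
  exact Nat.Coprime.eq_one_of_dvd h2 h1

/-- Suppose `a^x + b^y = c^z` has two positive solutions in different parity classes.
Then for some `g ∈ {a, b}`, the multiplicative order `u` of `g` modulo `c` is even and
`g^(u/2) ≡ -1 (mod c)`. -/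
theorem different_parity_classes_order (a b c : ℕ) (ha : 1 < a) (hb : 1 < b)
    (hab : Nat.Coprime a b) (hc : 1 < c) (hcodd : Odd c)
    (x₁ y₁ z₁ x₂ y₂ z₂ : ℕ) (hx₁ : 0 < x₁) (hy₁ : 0 < y₁) (hz₁ : 0 < z₁)
    (hx₂ : 0 < x₂) (hy₂ : 0 < y₂) (hz₂ : 0 < z₂)
    (heq₁ : a ^ x₁ + b ^ y₁ = c ^ z₁) (heq₂ : a ^ x₂ + b ^ y₂ = c ^ z₂)
    (hpar : ¬ (x₁ % 2 = x₂ % 2 ∧ y₁ % 2 = y₂ % 2)) :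
    ∃ g : ℕ, (g = a ∨ g = b) ∧ Even (orderOf (g : ZMod c)) ∧
      (g : ZMod c) ^ (orderOf (g : ZMod c) / 2) = -1 := by
  haveI : NeZero c := ⟨by omega⟩
  have hc3 : 3 ≤ c := by
    rcases Nat.odd_iff.mp hcodd with h; omega
  -- coprimality
  have hac : Nat.Coprime a c := coprime_of_eq hab x₁ y₁ z₁ hx₁ hz₁ heq₁
  have hbc : Nat.Coprime b c := by
    have heq₁' : b ^ y₁ + a ^ x₁ = c ^ z₁ := by omega
    exact coprime_of_eq hab.symm y₁ x₁ z₁ hy₁ hz₁ heq₁'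
  -- ring relations in ZMod c
  have hring : ∀ (x y z : ℕ), 0 < z → a ^ x + b ^ y = c ^ z →
      ((a : ZMod c)) ^ x = -((b : ZMod c)) ^ y := by
    intro x y z hz heq
    have h := congrArg (Nat.cast : ℕ → ZMod c) heq
    push_cast at h
    rw [ZMod.natCast_self, zero_pow hz.ne'] at h
    linear_combination h
  have hring1 := hring x₁ y₁ z₁ hz₁ heq₁
  have hring2 := hring x₂ y₂ z₂ hz₂ heq₂
  -- units
  set A : (ZMod c)ˣ := ZMod.unitOfCoprime a hac with hA_def
  set B : (ZMod c)ˣ := ZMod.unitOfCoprime b hbc with hB_def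
  have hAcoe : ((A : (ZMod c)ˣ) : ZMod c) = (a : ZMod c) := ZMod.coe_unitOfCoprime a hac
  have hBcoe : ((B : (ZMod c)ˣ) : ZMod c) = (b : ZMod c) := ZMod.coe_unitOfCoprime b hbc
  set ε : (ZMod c)ˣ := -1 with hε_def
  have hεcoe : ((ε : (ZMod c)ˣ) : ZMod c) = -1 := by rw [hε_def]; simp
  have hU1 : A ^ x₁ = ε * B ^ y₁ := by
    ext
    rw [Units.val_pow_eq_pow_val, Units.val_mul, Units.val_pow_eq_pow_val,
      hAcoe, hBcoe, hεcoe, hring1]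
    ring
  have hU2 : A ^ x₂ = ε * B ^ y₂ := by
    ext
    rw [Units.val_pow_eq_pow_val, Units.val_mul, Units.val_pow_eq_pow_val,
      hAcoe, hBcoe, hεcoe, hring2]
    ring
  -- ε properties
  have hε2 : ε ^ 2 = 1 := by
    ext
    rw [Units.val_pow_eq_pow_val, hεcoe, Units.val_one]; ring
  have hε1 : ε ≠ 1 := by
    intro h
    have h' : ((ε : (ZMod c)ˣ) : ZMod c) = 1 := by rw [h]; rfl
    rw [hε_def] at h'
    have h'' : (-1 : ZMod c) = 1 := by simpa using h'
    have : ((2 : ℕ) : ZMod c) = 0 := by push_cast; linear_combination -h''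
    have := (ZMod.natCast_eq_zero_iff 2 c).mp this
    have := Nat.le_of_dvd (by norm_num) this
    omega
  -- odd part trick
  set n := Fintype.card (ZMod c)ˣ with hn_def
  have hn0 : n ≠ 0 := Fintype.card_ne_zero
  set e := n.factorization 2 with he_def
  set m := n / 2 ^ e with hm_def
  have hmn : 2 ^ e * m = n := Nat.ordProj_mul_ordCompl_eq_self n 2
  have hmodd : Odd m := by
    have := Nat.coprime_ordCompl Nat.prime_two hn0
    exact Nat.Coprime.odd_of_left this
  set A' : (ZMod c)ˣ := A ^ m with hA'_def
  set B' : (ZMod c)ˣ := B ^ m with hB'_def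
  have hordA' : orderOf A' ∣ 2 ^ e := by
    apply orderOf_dvd_of_pow_eq_one
    rw [hA'_def, ← pow_mul, mul_comm m, hmn]
    exact pow_card_eq_one
  have hordB' : orderOf B' ∣ 2 ^ e := by
    apply orderOf_dvd_of_pow_eq_one
    rw [hB'_def, ← pow_mul, mul_comm m, hmn]
    exact pow_card_eq_one
  have hU1' : A' ^ x₁ = ε * B' ^ y₁ := by
    rw [hA'_def, hB'_def, ← pow_mul, mul_comm m, pow_mul, hU1, mul_pow, ← pow_mul,
      mul_comm y₁, pow_mul, sq_one_pow_odd hε2 hmodd]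
  have hU2' : A' ^ x₂ = ε * B' ^ y₂ := by
    rw [hA'_def, hB'_def, ← pow_mul, mul_comm m, pow_mul, hU2, mul_pow, ← pow_mul,
      mul_comm y₂, pow_mul, sq_one_pow_odd hε2 hmodd]
  -- two cases
  rcases Decidable.not_and_iff_or_not.mp hpar with hx | hy
  · -- x parity differs : ε ∈ zpowers B
    have hmem' : ε ∈ Subgroup.zpowers B' := aux_zpowers A' B' ε e hordA' x₁ y₁ x₂ y₂ hU1' hU2' hx
    have hmem : ε ∈ Subgroup.zpowers B := by
      have hle : Subgroup.zpowers B' ≤ Subgroup.zpowers B :=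
        Subgroup.zpowers_le.mpr ⟨(m : ℤ), zpow_natCast B m⟩
      exact hle hmem'
    obtain ⟨heven, hhalf⟩ := aux_order (orderOf_pos B) hε2 hε1 hmem
    refine ⟨b, Or.inr rfl, ?_, ?_⟩
    · rwa [← hBcoe, orderOf_units]
    · rw [← hBcoe, orderOf_units, ← Units.val_pow_eq_pow_val, hhalf, hε_def]
      simp
  · -- y parity differs : ε ∈ zpowers A
    have hV1' : B' ^ y₁ = ε * A' ^ x₁ := by
      rw [hU1', ← mul_assoc, ← pow_two, hε2, one_mul]
    have hV2' : B' ^ y₂ = ε * A' ^ x₂ := by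
      rw [hU2', ← mul_assoc, ← pow_two, hε2, one_mul]
    have hmem' : ε ∈ Subgroup.zpowers A' := aux_zpowers B' A' ε e hordB' y₁ x₁ y₂ x₂ hV1' hV2' hy
    have hmem : ε ∈ Subgroup.zpowers A := by
      have hle : Subgroup.zpowers A' ≤ Subgroup.zpowers A :=
        Subgroup.zpowers_le.mpr ⟨(m : ℤ), zpow_natCast A m⟩
      exact hle hmem'
    obtain ⟨heven, hhalf⟩ := aux_order (orderOf_pos A) hε2 hε1 hmem
    refine ⟨a, Or.inl rfl, ?_, ?_⟩
    · rwa [← hAcoe, orderOf_units]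
    · rw [← hAcoe, orderOf_units, ← Units.val_pow_eq_pow_val, hhalf, hε_def]
      simp
end

section
/- Let a and b be relatively prime integers both greater than 1 and let c be an odd integer greater than 1. Suppose the equation a^x + b^y = c^z has two solutions in positive integers (x1, y1, z1) and (x2, y2, z2) with x1 odd and x2 even. Then the multiplicative order u of b modulo c is even and b^(u/2) ≡ -1 (mod c). -/
/-- Suppose `a^x + b^y = c^z` has two positive solutions with `x₁` odd and `x₂` even.
Then the multiplicative order `u` of `b` modulo `c` is even and `b^(u/2) ≡ -1 (mod c)`. -/
theorem odd_even_x_order_b (a b c : ℕ) (ha : 1 < a) (hb : 1 < b)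
    (hab : Nat.Coprime a b) (hc : 1 < c) (hcodd : Odd c)
    (x₁ y₁ z₁ x₂ y₂ z₂ : ℕ) (hx₁ : 0 < x₁) (hy₁ : 0 < y₁) (hz₁ : 0 < z₁)
    (hx₂ : 0 < x₂) (hy₂ : 0 < y₂) (hz₂ : 0 < z₂)
    (heq₁ : a ^ x₁ + b ^ y₁ = c ^ z₁) (heq₂ : a ^ x₂ + b ^ y₂ = c ^ z₂)
    (hodd : Odd x₁) (heven : Even x₂) :
    Even (orderOf (b : ZMod c)) ∧ (b : ZMod c) ^ (orderOf (b : ZMod c) / 2) = -1 := by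
  haveI : Fact (2 < c) := ⟨by
    rcases hcodd with ⟨k, hk⟩; omega⟩
  haveI : NeZero c := ⟨by omega⟩
  -- b is coprime to c
  have hbc : Nat.Coprime b c := by
    have h1 : Nat.Coprime b (a ^ x₁ + b ^ y₁) := by
      rw [show y₁ = (y₁ - 1) + 1 by omega, pow_succ,
        Nat.coprime_add_mul_right_right]
      exact (hab.symm).pow_right _
    rw [heq₁] at h1
    exact h1.coprime_dvd_right (dvd_pow_self c hz₁.ne')
  set g : (ZMod c)ˣ := ZMod.unitOfCoprime b hbc with hg
  have hgcoe : (g : ZMod c) = (b : ZMod c) := ZMod.coe_unitOfCoprime b hbc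
  -- congruences mod c
  have hcast : ∀ x y z : ℕ, 0 < z → a ^ x + b ^ y = c ^ z →
      (a : ZMod c) ^ x = -((b : ZMod c) ^ y) := by
    intro x y z hz heq
    have := congrArg (Nat.cast : ℕ → ZMod c) heq
    push_cast at this
    rw [ZMod.natCast_self, zero_pow hz.ne'] at this
    linear_combination this
  have h1 := hcast x₁ y₁ z₁ hz₁ heq₁
  have h2 := hcast x₂ y₂ z₂ hz₂ heq₂
  -- key: B^(y₁*x₂) = -(B^(y₂*x₁))
  have hkey : (b : ZMod c) ^ (y₁ * x₂) = -((b : ZMod c) ^ (y₂ * x₁)) := by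
    have e1 : (a : ZMod c) ^ (x₁ * x₂) = (b : ZMod c) ^ (y₁ * x₂) := by
      rw [pow_mul, h1, heven.neg_pow, ← pow_mul]
    have e2 : (a : ZMod c) ^ (x₁ * x₂) = -((b : ZMod c) ^ (y₂ * x₁)) := by
      rw [mul_comm x₁ x₂, pow_mul, h2, hodd.neg_pow, ← pow_mul]
    rw [← e1, e2]
  -- lift to units
  have hkeyu : g ^ (y₁ * x₂) = -(g ^ (y₂ * x₁)) := by
    ext
    push_cast [hgcoe]
    exact hkey
  set k : ℤ := (y₁ * x₂ : ℕ) - (y₂ * x₁ : ℕ) with hk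
  have hgk : g ^ k = -1 := by
    rw [hk, zpow_sub, zpow_natCast, zpow_natCast, hkeyu, neg_mul, mul_inv_cancel]
  have hne1 : (-1 : (ZMod c)ˣ) ≠ 1 := by
    intro h
    have := congrArg (Units.val) h
    push_cast at this
    exact ZMod.neg_one_ne_one this
  have hsq : ((-1 : (ZMod c)ˣ)) ^ 2 = 1 := by rw [neg_one_sq]
  set u := orderOf g with hu
  have hupos : 0 < u := orderOf_pos g
  have hdvd2k : (u : ℤ) ∣ 2 * k := by
    rw [orderOf_dvd_iff_zpow_eq_one, mul_comm, zpow_mul, hgk]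
    exact_mod_cast hsq
  have hndvdk : ¬ (u : ℤ) ∣ k := by
    rw [orderOf_dvd_iff_zpow_eq_one, hgk]
    exact hne1
  -- u is even
  have hueven : Even u := by
    by_contra hodd'
    apply hndvdk
    have hcop : IsCoprime (u : ℤ) 2 := by
      rw [Int.isCoprime_iff_gcd_eq_one]
      have h2 : Nat.Coprime u 2 :=
        (Nat.not_even_iff_odd.mp hodd').coprime_two_right
      simpa [Int.gcd] using h2
    exact (hcop.dvd_of_dvd_mul_left hdvd2k)
  obtain ⟨v, hv⟩ := hueven
  have hv2 : u = 2 * v := by omega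
  have hvdvd : (v : ℤ) ∣ k := by
    rcases hdvd2k with ⟨t, ht⟩
    refine ⟨t, ?_⟩
    have : (2 : ℤ) * k = 2 * ((v : ℤ) * t) := by rw [ht, hv2]; push_cast; ring
    linarith
  obtain ⟨s, hs⟩ := hvdvd
  have hsodd : Odd s := by
    rw [← Int.not_even_iff_odd]
    intro ⟨t, ht⟩
    apply hndvdk
    refine ⟨t, ?_⟩
    rw [hs, ht, hv2]; push_cast; ring
  -- g ^ v = -1
  have hgv2 : (g ^ v) ^ 2 = 1 := by
    rw [← pow_mul, mul_comm, ← hv2, hu]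
    exact pow_orderOf_eq_one g
  have hgv : g ^ v = -1 := by
    rcases hsodd with ⟨t, ht⟩
    have hexp : k = (2 * (v : ℤ)) * t + (v : ℤ) := by rw [hs, ht]; ring
    have h2v : g ^ (2 * (v : ℤ)) = 1 := by
      rw [show (2 * (v : ℤ)) = ((2 * v : ℕ) : ℤ) by push_cast; ring, zpow_natCast, ← hv2]
      exact pow_orderOf_eq_one g
    have : g ^ k = g ^ v := by
      rw [hexp, zpow_add, zpow_mul, h2v, one_zpow, one_mul, zpow_natCast]
    rw [← this, hgk]
  -- conclude
  have hord : orderOf ((b : ZMod c)) = u := by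
    rw [← hgcoe, orderOf_units]
  constructor
  · rw [hord, hv2]; exact ⟨v, by omega⟩
  · rw [hord, hv2]
    have hv' : 2 * v / 2 = v := by omega
    rw [hv', ← hgcoe, ← Units.val_pow_eq_pow_val, hgv]
    push_cast
    ring
end

section
/- Let a and b be relatively prime integers both greater than 1 and let c be an odd integer greater than 1. Suppose the equation a^x + b^y = c^z has two solutions in positive integers (x1, y1, z1) and (x2, y2, z2) with y1 odd and y2 even. Then the multiplicative order u of a modulo c is even and a^(u/2) ≡ -1 (mod c). -/
/-- Suppose `a^x + b^y = c^z` has two positive solutions with `y₁` odd and `y₂` even.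
Then the multiplicative order `u` of `a` modulo `c` is even and `a^(u/2) ≡ -1 (mod c)`. -/
theorem odd_even_y_order_a (a b c : ℕ) (ha : 1 < a) (hb : 1 < b)
    (hab : Nat.Coprime a b) (hc : 1 < c) (hcodd : Odd c)
    (x₁ y₁ z₁ x₂ y₂ z₂ : ℕ) (hx₁ : 0 < x₁) (hy₁ : 0 < y₁) (hz₁ : 0 < z₁)
    (hx₂ : 0 < x₂) (hy₂ : 0 < y₂) (hz₂ : 0 < z₂)
    (heq₁ : a ^ x₁ + b ^ y₁ = c ^ z₁) (heq₂ : a ^ x₂ + b ^ y₂ = c ^ z₂)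
    (hodd : Odd y₁) (heven : Even y₂) :
    Even (orderOf (a : ZMod c)) ∧ (a : ZMod c) ^ (orderOf (a : ZMod c) / 2) = -1 := by
  haveI : NeZero c := ⟨by omega⟩
  have hac : Nat.Coprime a c := by
    have h1 : Nat.Coprime a (c ^ z₁) := by
      rw [← heq₁]
      have hrw : a ^ x₁ + b ^ y₁ = b ^ y₁ + a * a ^ (x₁ - 1) := by
        rw [← pow_succ', Nat.sub_add_cancel hx₁]; ring
      rw [hrw, Nat.coprime_add_mul_left_right]
      exact hab.pow_right y₁
    exact (Nat.coprime_pow_right_iff hz₁ a c).mp h1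
  have e₁ : (a : ZMod c) ^ x₁ = -(b : ZMod c) ^ y₁ := by
    have := congrArg (Nat.cast : ℕ → ZMod c) heq₁
    push_cast at this
    rw [ZMod.natCast_self, zero_pow hz₁.ne'] at this
    linear_combination this
  have e₂ : (a : ZMod c) ^ x₂ = -(b : ZMod c) ^ y₂ := by
    have := congrArg (Nat.cast : ℕ → ZMod c) heq₂
    push_cast at this
    rw [ZMod.natCast_self, zero_pow hz₂.ne'] at this
    linear_combination this
  have key : (a : ZMod c) ^ (x₁ * y₂) = -(a : ZMod c) ^ (x₂ * y₁) := by
    rw [pow_mul, pow_mul, e₁, e₂, Even.neg_pow heven, Odd.neg_pow hodd,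
      ← pow_mul, ← pow_mul, Nat.mul_comm y₁ y₂, neg_neg]
  have hunit : IsUnit ((a : ℕ) : ZMod c) := (ZMod.isUnit_iff_coprime a c).mpr hac
  have hd : 0 < orderOf ((a : ℕ) : ZMod c) := by
    obtain ⟨u, hu⟩ := hunit
    rw [← hu, orderOf_units]
    exact orderOf_pos u
  -- find k with (a)^k = -1
  have hk : (a : ZMod c) ^ (x₁ * y₂ + x₂ * y₁ * (orderOf ((a : ℕ) : ZMod c) - 1)) = -1 := by
    rw [pow_add, key, neg_mul, ← pow_add]
    have hle : x₂ * y₁ ≤ x₂ * y₁ * orderOf ((a : ℕ) : ZMod c) :=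
      Nat.le_mul_of_pos_right _ hd
    have hexp : x₂ * y₁ + x₂ * y₁ * (orderOf ((a : ℕ) : ZMod c) - 1)
        = orderOf ((a : ℕ) : ZMod c) * (x₂ * y₁) := by
      obtain ⟨e, he⟩ : ∃ e, orderOf ((a : ℕ) : ZMod c) = e + 1 := ⟨_, (Nat.succ_pred_eq_of_pos hd).symm⟩
      rw [he, Nat.add_sub_cancel]; ring
    rw [hexp, pow_mul, pow_orderOf_eq_one, one_pow]
  have hne : (-1 : ZMod c) ≠ 1 := by
    intro h
    have h2 : ((2 : ℕ) : ZMod c) = 0 := by push_cast; linear_combination -h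
    rw [ZMod.natCast_eq_zero_iff] at h2
    have hle2 : c ≤ 2 := Nat.le_of_dvd (by norm_num) h2
    have : c = 2 := by omega
    rw [this] at hcodd
    simp [Nat.odd_iff] at hcodd
  have hgr : (a : ZMod c) ^ ((x₁ * y₂ + x₂ * y₁ * (orderOf ((a : ℕ) : ZMod c) - 1)) % orderOf ((a : ℕ) : ZMod c)) = -1 := by
    rw [pow_mod_orderOf, hk]
  generalize hrdef : (x₁ * y₂ + x₂ * y₁ * (orderOf ((a : ℕ) : ZMod c) - 1)) % orderOf ((a : ℕ) : ZMod c) = r at hgr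
  have hrpos : 0 < r := by
    rcases Nat.eq_zero_or_pos r with h0 | h0
    · rw [h0, pow_zero] at hgr; exact absurd hgr.symm hne
    · exact h0
  have hrlt : r < orderOf ((a : ℕ) : ZMod c) := hrdef ▸ Nat.mod_lt _ hd
  have h2r : (a : ZMod c) ^ (2 * r) = 1 := by
    rw [two_mul, pow_add, hgr]; ring
  have hdvd : orderOf ((a : ℕ) : ZMod c) ∣ 2 * r := orderOf_dvd_of_pow_eq_one h2r
  have h2rd : 2 * r = orderOf ((a : ℕ) : ZMod c) := by
    rcases hdvd with ⟨m, hm⟩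
    have hm2 : m < 2 := by nlinarith
    interval_cases m <;> omega
  refine ⟨⟨r, by omega⟩, ?_⟩
  have : orderOf ((a : ℕ) : ZMod c) / 2 = r := by omega
  rw [this, hgr]
end

section
/- Let a and b be relatively prime integers both greater than 1 and let c be an odd integer greater than 1. Suppose (x1, y1, z1) and (x2, y2, z2) are solutions in positive integers to a^x + b^y = c^z lying in the same parity class, with x1 ≤ x2 and y1 ≤ y2. If δ is an integer satisfying a^((x2 - x1)/2) ≡ δ · b^((y2 - y1)/2) (mod c), then δ^2 ≡ 1 (mod c). -/
/-- Suppose `(x₁, y₁, z₁)` and `(x₂, y₂, z₂)` are positive solutions of `a^x + b^y = c^z`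
in the same parity class with `x₁ ≤ x₂` and `y₁ ≤ y₂`. If `δ` is an integer with
`a^((x₂-x₁)/2) ≡ δ * b^((y₂-y₁)/2) (mod c)`, then `δ² ≡ 1 (mod c)`. -/
theorem delta_sq_congruent_one (a b c : ℕ) (ha : 1 < a) (hb : 1 < b)
    (hab : Nat.Coprime a b) (hc : 1 < c) (hcodd : Odd c)
    (x₁ y₁ z₁ x₂ y₂ z₂ : ℕ) (hx₁ : 0 < x₁) (hy₁ : 0 < y₁) (hz₁ : 0 < z₁)
    (hx₂ : 0 < x₂) (hy₂ : 0 < y₂) (hz₂ : 0 < z₂)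
    (heq₁ : a ^ x₁ + b ^ y₁ = c ^ z₁) (heq₂ : a ^ x₂ + b ^ y₂ = c ^ z₂)
    (hparx : x₁ % 2 = x₂ % 2) (hpary : y₁ % 2 = y₂ % 2)
    (hxle : x₁ ≤ x₂) (hyle : y₁ ≤ y₂)
    (δ : ℤ) (hδ : (a : ℤ) ^ ((x₂ - x₁) / 2) ≡ δ * (b : ℤ) ^ ((y₂ - y₁) / 2) [ZMOD (c : ℤ)]) :
    δ ^ 2 ≡ 1 [ZMOD (c : ℤ)] := by
  haveI : NeZero c := ⟨by omega⟩
  set u := (x₂ - x₁) / 2 with hu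
  set v := (y₂ - y₁) / 2 with hv
  have hxu : x₂ = x₁ + 2 * u := by omega
  have hyv : y₂ = y₁ + 2 * v := by omega
  -- coprimality with c
  have hac : Nat.Coprime a c := by
    have hd : Nat.gcd a c ∣ b ^ y₁ := by
      have h1 : Nat.gcd a c ∣ c ^ z₁ := dvd_pow (Nat.gcd_dvd_right a c) hz₁.ne'
      have h2 : Nat.gcd a c ∣ a ^ x₁ := dvd_pow (Nat.gcd_dvd_left a c) hx₁.ne'
      have := Nat.dvd_sub h1 h2
      rwa [← heq₁, Nat.add_sub_cancel_left] at this
    have : Nat.Coprime (Nat.gcd a c) (b ^ y₁) :=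
      Nat.Coprime.pow_right _ (Nat.Coprime.coprime_dvd_left (Nat.gcd_dvd_left a c) hab)
    exact this.eq_one_of_dvd hd
  have hbc : Nat.Coprime b c := by
    have hd : Nat.gcd b c ∣ a ^ x₁ := by
      have h1 : Nat.gcd b c ∣ c ^ z₁ := dvd_pow (Nat.gcd_dvd_right b c) hz₁.ne'
      have h2 : Nat.gcd b c ∣ b ^ y₁ := dvd_pow (Nat.gcd_dvd_left b c) hy₁.ne'
      have := Nat.dvd_sub h1 h2
      rwa [← heq₁, Nat.add_sub_cancel] at this
    have : Nat.Coprime (Nat.gcd b c) (a ^ x₁) :=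
      Nat.Coprime.pow_right _ (Nat.Coprime.coprime_dvd_left (Nat.gcd_dvd_left b c) hab.symm)
    exact this.eq_one_of_dvd hd
  have hA : IsUnit ((a : ZMod c)) := (ZMod.isUnit_iff_coprime a c).mpr hac
  have hB : IsUnit ((b : ZMod c)) := (ZMod.isUnit_iff_coprime b c).mpr hbc
  -- cast the equations to ZMod c
  have h1 : (a : ZMod c) ^ x₁ + (b : ZMod c) ^ y₁ = 0 := by
    have := congrArg (Nat.cast : ℕ → ZMod c) heq₁
    push_cast at this
    rw [this, ZMod.natCast_self, zero_pow hz₁.ne']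
  have h2 : (a : ZMod c) ^ x₂ + (b : ZMod c) ^ y₂ = 0 := by
    have := congrArg (Nat.cast : ℕ → ZMod c) heq₂
    push_cast at this
    rw [this, ZMod.natCast_self, zero_pow hz₂.ne']
  -- key: a^(2u) = b^(2v) in ZMod c
  have key : (a : ZMod c) ^ (2 * u) = (b : ZMod c) ^ (2 * v) := by
    have hcancel : (a : ZMod c) ^ x₁ * (a : ZMod c) ^ (2 * u)
        = (a : ZMod c) ^ x₁ * (b : ZMod c) ^ (2 * v) := by
      have hb1 : (b : ZMod c) ^ y₁ = -(a : ZMod c) ^ x₁ := by linear_combination h1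
      have ha2 : (a : ZMod c) ^ x₂ = -(b : ZMod c) ^ y₂ := by linear_combination h2
      calc (a : ZMod c) ^ x₁ * (a : ZMod c) ^ (2 * u)
          = (a : ZMod c) ^ x₂ := by rw [hxu, pow_add]
        _ = -((b : ZMod c) ^ y₁ * (b : ZMod c) ^ (2 * v)) := by rw [ha2, hyv, pow_add]
        _ = (a : ZMod c) ^ x₁ * (b : ZMod c) ^ (2 * v) := by rw [hb1]; ring
    exact (hA.pow x₁).mul_left_cancel hcancel
  -- translate hδ
  have hδ' : ((a : ℤ) : ZMod c) ^ u = ((δ : ZMod c)) * ((b : ℤ) : ZMod c) ^ v := by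
    have := (ZMod.intCast_eq_intCast_iff _ _ c).mpr hδ
    push_cast at this ⊢
    exact this
  push_cast at hδ'
  -- conclude
  have : ((δ : ZMod c)) ^ 2 * (b : ZMod c) ^ (2 * v) = 1 * (b : ZMod c) ^ (2 * v) := by
    have h := congrArg (· ^ 2) hδ'
    simp only [mul_pow, ← pow_mul] at h
    rw [one_mul, mul_comm 2 v] at *
    rw [← h, ← key, mul_comm u 2]
  have hfin : ((δ : ZMod c)) ^ 2 = 1 := by
    have hBu : IsUnit ((b : ZMod c) ^ (2 * v)) := hB.pow _
    exact hBu.mul_right_cancel (by rw [this])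
  rw [← ZMod.intCast_eq_intCast_iff]
  push_cast
  exact hfin
end

section
/- Let a and b be relatively prime integers both greater than 1 and let c be an odd integer greater than 1. Suppose (x1, y1, z1), ..., (xn, yn, zn) are solutions in positive integers to a^x + b^y = c^z such that gcd(x1, ..., xn) = 1. Then there exists a nonnegative integer t such that a ≡ b^t (mod c) or a ≡ -b^t (mod c). -/
/-- Suppose `(x 1, y 1, z 1), ..., (x n, y n, z n)` are positive solutions of
`a^x + b^y = c^z` with `gcd(x 1, ..., x n) = 1`. Then `a ≡ ±b^t (mod c)` for some
nonnegative integer `t`. -/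
theorem a_congruent_pm_power_b (a b c : ℕ) (ha : 1 < a) (hb : 1 < b)
    (hab : Nat.Coprime a b) (hc : 1 < c) (hcodd : Odd c)
    (n : ℕ) (hn : 0 < n) (x y z : Fin n → ℕ)
    (hx : ∀ i, 0 < x i) (hy : ∀ i, 0 < y i) (hz : ∀ i, 0 < z i)
    (heq : ∀ i, a ^ x i + b ^ y i = c ^ z i)
    (hgcd : Finset.univ.gcd x = 1) :
    ∃ t : ℕ, (a : ZMod c) = (b : ZMod c) ^ t ∨ (a : ZMod c) = -(b : ZMod c) ^ t := by
  have hc0 : c ≠ 0 := by omega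
  have : NeZero c := ⟨hc0⟩
  have i0 : Fin n := ⟨0, hn⟩
  -- a and b are coprime to c
  have hac : Nat.Coprime a c := by
    have hsub : c ^ z i0 - a ^ x i0 = b ^ y i0 := by have := heq i0; omega
    have hd : Nat.gcd a c ∣ b ^ y i0 := by
      rw [← hsub]
      exact Nat.dvd_sub (dvd_pow (Nat.gcd_dvd_right a c) (hz i0).ne')
        (dvd_pow (Nat.gcd_dvd_left a c) (hx i0).ne')
    have : Nat.gcd a c ∣ 1 := (hab.pow_right (y i0)) ▸
      Nat.dvd_gcd (Nat.gcd_dvd_left a c) hd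
    exact Nat.eq_one_of_dvd_one this
  have hbc : Nat.Coprime b c := by
    have hsub : c ^ z i0 - b ^ y i0 = a ^ x i0 := by have := heq i0; omega
    have hd : Nat.gcd b c ∣ a ^ x i0 := by
      rw [← hsub]
      exact Nat.dvd_sub (dvd_pow (Nat.gcd_dvd_right b c) (hz i0).ne')
        (dvd_pow (Nat.gcd_dvd_left b c) (hy i0).ne')
    have : Nat.gcd b c ∣ 1 := (hab.symm.pow_right (x i0)) ▸
      Nat.dvd_gcd (Nat.gcd_dvd_left b c) hd
    exact Nat.eq_one_of_dvd_one this
  set u : (ZMod c)ˣ := ZMod.unitOfCoprime a hac with hu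
  set v : (ZMod c)ˣ := ZMod.unitOfCoprime b hbc with hv
  -- each solution gives u ^ x i = -(v ^ y i)
  have key : ∀ i, u ^ x i = -(v ^ y i) := by
    intro i
    ext
    push_cast [hu, hv, ZMod.coe_unitOfCoprime]
    have := congrArg (Nat.cast : ℕ → ZMod c) (heq i)
    push_cast at this
    rw [ZMod.natCast_self, zero_pow (hz i).ne'] at this
    linear_combination this
  -- the set of exponents s with u ^ s = ± v ^ k is an additive subgroup of ℤ
  set K : AddSubgroup ℤ :=
    { carrier := {s : ℤ | ∃ k : ℤ, u ^ s = v ^ k ∨ u ^ s = -v ^ k}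
      zero_mem' := ⟨0, Or.inl (by simp)⟩
      add_mem' := by
        rintro s s' ⟨k, hk⟩ ⟨k', hk'⟩
        refine ⟨k + k', ?_⟩
        rw [zpow_add, zpow_add]
        rcases hk with hk | hk <;> rcases hk' with hk' | hk' <;> rw [hk, hk'] <;>
          simp [neg_mul, mul_neg]
      neg_mem' := by
        rintro s ⟨k, hk⟩
        refine ⟨-k, ?_⟩
        rw [zpow_neg, zpow_neg]
        rcases hk with hk | hk <;> rw [hk] <;> simp [inv_neg] } with hK
  have hxK : ∀ i, (x i : ℤ) ∈ K := by
    intro i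
    refine ⟨(y i : ℤ), Or.inr ?_⟩
    rw [zpow_natCast, zpow_natCast, key i]
  have h1K : (1 : ℤ) ∈ K := by
    obtain ⟨g, hg⟩ := Int.subgroup_cyclic K
    have hdvd : ∀ i, g ∣ (x i : ℤ) := by
      intro i
      have := hxK i
      rw [hg, AddSubgroup.mem_closure_singleton] at this
      obtain ⟨m, hm⟩ := this
      exact ⟨m, by rw [← hm, smul_eq_mul]; ring⟩
    have hna : g.natAbs ∣ 1 := by
      rw [← hgcd]
      refine Finset.dvd_gcd fun i _ => ?_
      have := hdvd i
      exact Int.ofNat_dvd.mp (Int.natAbs_dvd.mpr this)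
    have : g = 1 ∨ g = -1 := by
      rcases Int.natAbs_eq g with h | h <;> simp [Nat.eq_one_of_dvd_one hna] at h <;> omega
    rw [hg, AddSubgroup.mem_closure_singleton]
    exact ⟨g, by rcases this with h | h <;> rw [h] <;> norm_num⟩
  obtain ⟨k, hk⟩ := h1K
  rw [zpow_one] at hk
  -- convert the integer exponent to a natural number
  have hvord : 0 < orderOf v := orderOf_pos v
  have hmod : v ^ ((k % (orderOf v : ℤ)).toNat : ℤ) = v ^ k := by
    rw [Int.toNat_of_nonneg (Int.emod_nonneg k (by exact_mod_cast hvord.ne'))]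
    exact zpow_mod_orderOf v k
  refine ⟨(k % (orderOf v : ℤ)).toNat, ?_⟩
  have hua : (u : ZMod c) = a := ZMod.coe_unitOfCoprime a hac
  have hvb : (v : ZMod c) = b := ZMod.coe_unitOfCoprime b hbc
  rcases hk with hk | hk
  · left
    rw [← hua, ← hvb, hk, ← hmod, zpow_natCast]
    push_cast
    ring
  · right
    rw [← hua, ← hvb, hk]
    rw [← hmod, zpow_natCast]
    push_cast
    ring
end

section
/- The equation 3^x + 10^y = 13^z has exactly two solutions in positive integers (x, y, z), namely (x, y, z) = (1, 1, 1) and (x, y, z) = (7, 1, 3). -/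
set_option maxRecDepth 100000
set_option maxHeartbeats 2000000
set_option exponentiation.threshold 20000

private lemma pow_mod_cycle (a m n x : ℕ) (h : a ^ n % m = 1 % m) :
    a ^ x % m = a ^ (x % n) % m := by
  conv_lhs => rw [← Nat.div_add_mod x n]
  rw [pow_add, pow_mul, Nat.mul_mod, Nat.pow_mod, h, ← Nat.pow_mod, one_pow, ← Nat.mul_mod,
    one_mul]

private lemma ball_of_chunk {P : ℕ → Prop} (a b r : ℕ)
    (h : ∀ i < a, ∀ j < b, P (b * i + j)) (hr : r < a * b) : P r := by
  have hb : 0 < b := by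
    rcases Nat.eq_zero_or_pos b with h0 | h0
    · subst h0; omega
    · exact h0
  have := h (r / b) ((Nat.div_lt_iff_lt_mul hb).mpr (by omega)) (r % b) (Nat.mod_lt _ hb)
  rwa [Nat.div_add_mod] at this

private lemma ten_pow_mod22 : ∀ e : ℕ, 10 ^ e % 22 = 1 ∨ 10 ^ e % 22 = 10 ∨ 10 ^ e % 22 = 12 := by
  intro e
  induction e with
  | zero => left; rfl
  | succ n ih =>
    have hs : 10 ^ (n + 1) % 22 = (10 ^ n % 22) * 10 % 22 := by
      rw [pow_succ, Nat.mul_mod]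
    rcases ih with h | h | h <;> rw [h] at hs <;> omega

private lemma reduce_mod (m n3 n13 x z : ℕ) (h3 : 3 ^ n3 % m = 1 % m)
    (h13 : 13 ^ n13 % m = 1 % m) (E : 3 ^ x + 10 = 13 ^ z) :
    (3 ^ (x % n3) % m + 10 % m) % m = 13 ^ (z % n13) % m := by
  have h := congrArg (· % m) E
  rwa [Nat.add_mod, pow_mod_cycle 3 m n3 x h3, pow_mod_cycle 13 m n13 z h13] at h

/-- The equation `3^x + 10^y = 13^z` has exactly two solutions in positive integers
`(x, y, z)`, namely `(1, 1, 1)` and `(7, 1, 3)`. -/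
theorem solutions_3_10_13 :
    {p : ℕ × ℕ × ℕ | 0 < p.1 ∧ 0 < p.2.1 ∧ 0 < p.2.2 ∧
      3 ^ p.1 + 10 ^ p.2.1 = 13 ^ p.2.2} = {(1, 1, 1), (7, 1, 3)} := by
  ext ⟨x, y, z⟩
  simp only [Set.mem_setOf_eq, Set.mem_insert_iff, Set.mem_singleton_iff, Prod.mk.injEq]
  constructor
  · rintro ⟨hx, hy, hz, E⟩
    -- Step 1: y = 1
    have hy1 : y = 1 := by
      by_contra hne
      obtain ⟨e, rfl⟩ : ∃ e, y = e + 2 := ⟨y - 2, by omega⟩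
      have ht := ten_pow_mod22 e
      have h10 : 10 ^ (e + 2) % 2200 = (10 ^ e % 22) * 100 := by
        have h1 : (10 : ℕ) ^ (e + 2) = 10 ^ e * 100 := by ring
        have h2 : (2200 : ℕ) = 22 * 100 := by norm_num
        rw [h1, h2, Nat.mul_mod_mul_right]
      have hmod : (3 ^ (x % 20) % 2200 + (10 ^ e % 22) * 100) % 2200 = 13 ^ (z % 20) % 2200 := by
        have h := congrArg (· % 2200) E
        rwa [Nat.add_mod, pow_mod_cycle 3 2200 20 x (by norm_num),
          pow_mod_cycle 13 2200 20 z (by norm_num), h10] at h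
      have hdec : ∀ u < 20, ∀ v < 20,
          (3 ^ u % 2200 + 100) % 2200 ≠ 13 ^ v % 2200 ∧
          (3 ^ u % 2200 + 1000) % 2200 ≠ 13 ^ v % 2200 ∧
          (3 ^ u % 2200 + 1200) % 2200 ≠ 13 ^ v % 2200 := by decide
      have h20x : x % 20 < 20 := Nat.mod_lt _ (by norm_num)
      have h20z : z % 20 < 20 := Nat.mod_lt _ (by norm_num)
      obtain ⟨c1, c2, c3⟩ := hdec _ h20x _ h20z
      rcases ht with h | h | h <;> rw [h] at hmod <;> simp_all
    subst hy1
    have E' : 3 ^ x + 10 = 13 ^ z := by simpa using E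
    -- Step 2: x, z odd
    have hpar : x % 2 = 1 ∧ z % 2 = 1 := by
      have h := reduce_mod 8 2 2 x z (by norm_num) (by norm_num) E'
      have hdec : ∀ u < 2, ∀ v < 2,
          (3 ^ u % 8 + 10 % 8) % 8 = 13 ^ v % 8 → u = 1 ∧ v = 1 := by decide
      exact hdec _ (Nat.mod_lt _ (by norm_num)) _ (Nat.mod_lt _ (by norm_num)) h
    -- Step 3: x ≡ 1 mod 3
    have hx3 : x % 3 = 1 := by
      have h13 : 13 ^ z % 13 = 0 := by
        have : (13 : ℕ) ∣ 13 ^ z := dvd_pow_self 13 (by omega)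
        omega
      have h := congrArg (· % 13) E'
      rw [Nat.add_mod, pow_mod_cycle 3 13 3 x (by norm_num), h13] at h
      have hdec : ∀ u < 3, (3 ^ u % 13 + 10 % 13) % 13 = 0 → u = 1 := by decide
      exact hdec _ (Nat.mod_lt _ (by norm_num)) h
    rcases Nat.lt_or_ge x 8 with hx8 | hx8
    · -- small x : x = 1 or x = 7
      have hx17 : x = 1 ∨ x = 7 := by omega
      rcases hx17 with rfl | rfl
      · have h13 : (13 : ℕ) ^ z = 13 ^ 1 := by omega
        have hz1 : z = 1 := Nat.pow_right_injective (by norm_num) h13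
        exact Or.inl ⟨rfl, rfl, hz1⟩
      · have h13 : (13 : ℕ) ^ z = 13 ^ 3 := by norm_num at E' ⊢; omega
        have hz3 : z = 3 := Nat.pow_right_injective (by norm_num) h13
        exact Or.inr ⟨rfl, rfl, hz3⟩
    · -- large x : contradiction
      exfalso
      have h6561 : 13 ^ (z % 2187) % 6561 = 10 := by
        have hdvd : (6561 : ℕ) ∣ 3 ^ x := by
          have h1 : (3 : ℕ) ^ 8 ∣ 3 ^ x := pow_dvd_pow 3 hx8
          norm_num at h1; exact h1
        have h0 : 3 ^ x % 6561 = 0 := by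
          obtain ⟨k, hk⟩ := hdvd
          simp [hk, Nat.mul_mod_right]
        have h := congrArg (· % 6561) E'
        rw [Nat.add_mod, h0, pow_mod_cycle 13 6561 2187 z (by norm_num)] at h
        omega
      have hz2187 : z % 2187 = 1461 := by
        have chunk : ∀ i < 22, ∀ j < 100,
            13 ^ (100 * i + j) % 6561 = 10 → 100 * i + j = 1461 := by decide
        exact ball_of_chunk 22 100 (z % 2187)
          (P := fun r => 13 ^ r % 6561 = 10 → r = 1461) chunk
          (by have := Nat.mod_lt z (show 0 < 2187 by norm_num); omega) h6561
      have hz4374 : z % 4374 = 1461 := by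
        have h1 : z % 4374 % 2187 = z % 2187 := Nat.mod_mod_of_dvd z (by norm_num)
        have h2 : z % 4374 % 2 = z % 2 := Nat.mod_mod_of_dvd z (by norm_num)
        omega
      have hfin := reduce_mod 17497 729 8748 x z (by norm_num) (by norm_num) E'
      have hu3 : x % 729 % 3 = 1 := by
        rw [Nat.mod_mod_of_dvd x (by norm_num : (3 : ℕ) ∣ 729)]; exact hx3
      have hv : z % 8748 % 4374 = 1461 := by
        rw [Nat.mod_mod_of_dvd z (by norm_num : (4374 : ℕ) ∣ 8748)]; exact hz4374
      have hv' : z % 8748 = 1461 ∨ z % 8748 = 5835 := by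
        have := Nat.mod_lt z (show 0 < 8748 by norm_num); omega
      have chunk2 : ∀ i < 8, ∀ j < 100, (100 * i + j) % 3 = 1 →
          (3 ^ (100 * i + j) % 17497 + 10 % 17497) % 17497 ≠ 11616 ∧
          (3 ^ (100 * i + j) % 17497 + 10 % 17497) % 17497 ≠ 5881 := by decide
      have hball := ball_of_chunk 8 100 (x % 729)
        (P := fun r => r % 3 = 1 →
          (3 ^ r % 17497 + 10 % 17497) % 17497 ≠ 11616 ∧
          (3 ^ r % 17497 + 10 % 17497) % 17497 ≠ 5881) chunk2
        (by have := Nat.mod_lt x (show 0 < 729 by norm_num); omega) hu3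
      have hc1 : (13 : ℕ) ^ 1461 % 17497 = 11616 := by norm_num
      have hc2 : (13 : ℕ) ^ 5835 % 17497 = 5881 := by norm_num
      rcases hv' with h | h <;> rw [h] at hfin
      · rw [hc1] at hfin; exact hball.1 hfin
      · rw [hc2] at hfin; exact hball.2 hfin
  · rintro (⟨rfl, rfl, rfl⟩ | ⟨rfl, rfl, rfl⟩) <;> norm_num
end

section
/- Every solution in positive integers (x, y, z) to the equation 3^x + 10^y = 13^z has y odd. -/
/-- Every solution in positive integers `(x, y, z)` of `3^x + 10^y = 13^z` has `y` odd. -/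
theorem y_odd_3_10_13 (x y z : ℕ) (hx : 0 < x) (hy : 0 < y) (hz : 0 < z)
    (heq : 3 ^ x + 10 ^ y = 13 ^ z) : Odd y := by
  by_contra hodd
  rw [Nat.not_odd_iff_even] at hodd
  obtain ⟨k, hk⟩ := hodd
  have h13 : ((3 : ZMod 13) ^ x + 10 ^ y = 13 ^ z) := by
    have := congrArg (Nat.cast : ℕ → ZMod 13) heq
    push_cast at this
    exact this
  have h0 : (13 : ZMod 13) = 0 := by decide
  rw [h0, zero_pow hz.ne', hk] at h13
  have hy10 : (10 : ZMod 13) ^ (k + k) = 9 ^ k := by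
    rw [← two_mul, pow_mul]
    have : (10 : ZMod 13) ^ 2 = 9 := by decide
    rw [this]
  rw [hy10] at h13
  -- 3 and 9 have order 3 mod 13
  have hx3 : (3 : ZMod 13) ^ x = 3 ^ (x % 3) := by
    conv_lhs => rw [← Nat.div_add_mod x 3, pow_add, pow_mul]
    have : (3 : ZMod 13) ^ 3 = 1 := by decide
    rw [this, one_pow, one_mul]
  have hk9 : (9 : ZMod 13) ^ k = 9 ^ (k % 3) := by
    conv_lhs => rw [← Nat.div_add_mod k 3, pow_add, pow_mul]
    have : (9 : ZMod 13) ^ 3 = 1 := by decide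
    rw [this, one_pow, one_mul]
  rw [hx3, hk9] at h13
  have hx' : x % 3 < 3 := Nat.mod_lt _ (by norm_num)
  have hk' : k % 3 < 3 := Nat.mod_lt _ (by norm_num)
  interval_cases h : x % 3 <;> interval_cases h2 : k % 3 <;> revert h13 <;> decide
end

section
/- The equation 3^x + 13^y = 2200^z has exactly two solutions in positive integers (x, y, z), namely (x, y, z) = (7, 1, 1) and (x, y, z) = (1, 3, 1). -/
lemma pow3_mod80 (x : ℕ) : 3 ^ x % 80 = 3 ^ (x % 4) % 80 := by
  conv_lhs => rw [← Nat.div_add_mod x 4, pow_add, pow_mul]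
  rw [Nat.mul_mod, Nat.pow_mod]
  norm_num

lemma pow13_mod80 (y : ℕ) : 13 ^ y % 80 = 13 ^ (y % 4) % 80 := by
  conv_lhs => rw [← Nat.div_add_mod y 4, pow_add, pow_mul]
  rw [Nat.mul_mod, Nat.pow_mod]
  norm_num

lemma sum_mod80 (x y : ℕ) : (3 ^ x + 13 ^ y) % 80 ≠ 0 := by
  rw [Nat.add_mod, pow3_mod80, pow13_mod80]
  have hx : x % 4 < 4 := Nat.mod_lt _ (by norm_num)
  have hy : y % 4 < 4 := Nat.mod_lt _ (by norm_num)
  interval_cases h1 : x % 4 <;> interval_cases h2 : y % 4 <;> decide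

/-- The equation `3^x + 13^y = 2200^z` has exactly two solutions in positive integers
`(x, y, z)`, namely `(7, 1, 1)` and `(1, 3, 1)`. -/
theorem solutions_3_13_2200 :
    {p : ℕ × ℕ × ℕ | 0 < p.1 ∧ 0 < p.2.1 ∧ 0 < p.2.2 ∧
      3 ^ p.1 + 13 ^ p.2.1 = 2200 ^ p.2.2} = {(7, 1, 1), (1, 3, 1)} := by
  ext ⟨x, y, z⟩
  simp only [Set.mem_setOf_eq, Set.mem_insert_iff, Set.mem_singleton_iff, Prod.mk.injEq]
  constructor
  · rintro ⟨hx, hy, hz, heq⟩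
    -- first show z = 1
    have hz1 : z = 1 := by
      by_contra hne
      have hz2 : 2 ≤ z := by omega
      have h80 : 2200 ^ z % 80 = 0 := by
        obtain ⟨k, rfl⟩ := Nat.exists_eq_add_of_le hz2
        rw [pow_add]
        have : (2200 : ℕ) ^ 2 % 80 = 0 := by norm_num
        omega
      have := sum_mod80 x y
      rw [heq] at this
      exact this h80
    subst hz1
    simp only [pow_one] at heq
    have hxle : x ≤ 7 := by
      by_contra h
      have : 3 ^ 8 ≤ 3 ^ x := Nat.pow_le_pow_right (by norm_num) (by omega)
      have : 13 ^ 1 ≤ 13 ^ y := Nat.pow_le_pow_right (by norm_num) hy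
      omega
    have hyle : y ≤ 3 := by
      by_contra h
      have : 13 ^ 4 ≤ 13 ^ y := Nat.pow_le_pow_right (by norm_num) (by omega)
      have : 3 ^ 1 ≤ 3 ^ x := Nat.pow_le_pow_right (by norm_num) hx
      omega
    interval_cases x <;> interval_cases y <;> omega
  · rintro (⟨rfl, rfl, rfl⟩ | ⟨rfl, rfl, rfl⟩) <;> norm_num
end

section
/- The equation 3^x + 13^y = 2200^z has no solution in positive integers (x, y, z) with z ≥ 2. -/
/-- The equation `3^x + 13^y = 2200^z` has no solution in positive integers `(x, y, z)`
with `z ≥ 2`. -/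
theorem no_solution_3_13_2200_z_ge_two (x y z : ℕ) (hx : 0 < x) (hy : 0 < y)
    (hz : 2 ≤ z) : 3 ^ x + 13 ^ y ≠ 2200 ^ z := by
  intro h
  have h3_16 : 3 ^ x % 16 = 3 ^ (x % 4) % 16 := by
    conv_lhs => rw [← Nat.div_add_mod x 4, pow_add, pow_mul]
    rw [Nat.mul_mod, Nat.pow_mod]; norm_num
  have h13_16 : 13 ^ y % 16 = 13 ^ (y % 4) % 16 := by
    conv_lhs => rw [← Nat.div_add_mod y 4, pow_add, pow_mul]
    rw [Nat.mul_mod, Nat.pow_mod]; norm_num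
  have h3_5 : 3 ^ x % 5 = 3 ^ (x % 4) % 5 := by
    conv_lhs => rw [← Nat.div_add_mod x 4, pow_add, pow_mul]
    rw [Nat.mul_mod, Nat.pow_mod]; norm_num
  have h13_5 : 13 ^ y % 5 = 13 ^ (y % 4) % 5 := by
    conv_lhs => rw [← Nat.div_add_mod y 4, pow_add, pow_mul]
    rw [Nat.mul_mod, Nat.pow_mod]; norm_num
  have hdvd : (2200 : ℕ) ^ 2 ∣ 2200 ^ z := pow_dvd_pow 2200 hz
  have hd16 : 2200 ^ z % 16 = 0 :=
    Nat.dvd_iff_mod_eq_zero.mp (dvd_trans ⟨302500, by norm_num⟩ hdvd)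
  have hd5 : 2200 ^ z % 5 = 0 :=
    Nat.dvd_iff_mod_eq_zero.mp (dvd_trans ⟨968000, by norm_num⟩ hdvd)
  have e16 : (3 ^ (x % 4) + 13 ^ (y % 4)) % 16 = 0 := by
    rw [Nat.add_mod, ← h3_16, ← h13_16, ← Nat.add_mod, h, hd16]
  have e5 : (3 ^ (x % 4) + 13 ^ (y % 4)) % 5 = 0 := by
    rw [Nat.add_mod, ← h3_5, ← h13_5, ← Nat.add_mod, h, hd5]
  have ha : x % 4 < 4 := Nat.mod_lt _ (by norm_num)
  have hb : y % 4 < 4 := Nat.mod_lt _ (by norm_num)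
  generalize x % 4 = a at e16 e5 ha
  generalize y % 4 = b at e16 e5 hb
  interval_cases a <;> interval_cases b <;> revert e16 e5 <;> norm_num
end

section
/- The equation 5^x + 2^y = 3^z has exactly two solutions in positive integers (x, y, z), namely (x, y, z) = (1, 2, 2) and (x, y, z) = (2, 1, 3). -/
set_option maxRecDepth 100000

/-- Periodicity of powers modulo `m`. -/
lemma pow_mod_period (a d m : ℕ) (hm : 1 < m) (h : a ^ d % m = 1) (n : ℕ) :
    a ^ n % m = a ^ (n % d) % m := by
  conv_lhs => rw [← Nat.div_add_mod n d]
  rw [pow_add, pow_mul, Nat.mul_mod, Nat.pow_mod, h, one_pow,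
    Nat.one_mod_eq_one.mpr (by omega : m ≠ 1), one_mul, Nat.mod_mod_of_dvd _ (dvd_refl m)]

/-- Case `y = 1`, large `x`: impossible, via mod 125 and mod 8951. -/
lemma case_y1_big (x z : ℕ) (hx : 3 ≤ x) (h : 5 ^ x + 2 = 3 ^ z) : False := by
  -- mod 125 : 3^z ≡ 2
  have h125 : 3 ^ z % 125 = 2 := by
    obtain ⟨k, hk⟩ : (125 : ℕ) ∣ 5 ^ x := by
      calc (125 : ℕ) = 5 ^ 3 := by norm_num
        _ ∣ 5 ^ x := pow_dvd_pow 5 hx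
    rw [← h, hk]
    omega
  have hz100 : z % 100 = 43 := by
    have h1 : 3 ^ (z % 100) % 125 = 2 := by
      rw [← pow_mod_period 3 100 125 (by norm_num) (by decide)]
      exact h125
    have h2 : ∀ r < 100, 3 ^ r % 125 = 2 → r = 43 := by decide
    exact h2 _ (Nat.mod_lt _ (by norm_num)) h1
  -- mod 8951 : 3^z ≡ 3^18
  have h3z : 3 ^ z % 8951 = 3 ^ 18 % 8951 := by
    rw [pow_mod_period 3 25 8951 (by norm_num) (by decide)]
    have : z % 25 = 18 := by omega
    rw [this]
  have h5x : 5 ^ x % 8951 = 5 ^ (x % 895) % 8951 :=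
    pow_mod_period 5 895 8951 (by norm_num) (by decide) x
  have key : ∀ r < 895, (5 ^ r % 8951 + 2) % 8951 ≠ 3 ^ 18 % 8951 := by decide
  apply key (x % 895) (Nat.mod_lt _ (by norm_num))
  rw [← h5x, ← h3z, ← h]
  omega

/-- The equation `5^x + 2^y = 3^z` has exactly two solutions in positive integers
`(x, y, z)`, namely `(1, 2, 2)` and `(2, 1, 3)`. -/
theorem solutions_5_2_3 :
    {p : ℕ × ℕ × ℕ | 0 < p.1 ∧ 0 < p.2.1 ∧ 0 < p.2.2 ∧
      5 ^ p.1 + 2 ^ p.2.1 = 3 ^ p.2.2} = {(1, 2, 2), (2, 1, 3)} := by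
  ext ⟨x, y, z⟩
  simp only [Set.mem_setOf_eq, Set.mem_insert_iff, Set.mem_singleton_iff, Prod.mk.injEq]
  constructor
  · rintro ⟨hx, hy, hz, h⟩
    have hpow2 : (2 : ℕ) ≤ 2 := le_refl 2
    match y, hy with
    | 1, _ =>
      -- 5^x + 2 = 3^z
      have hx2 : x ≤ 2 := by
        by_contra hc
        exact case_y1_big x z (by omega) (by simpa using h)
      interval_cases x
      · -- 5 + 2 = 3^z : impossible
        exfalso
        norm_num at h
        match z, hz with
        | 1, _ => norm_num at h
        | (n+2), _ =>
          have : 9 ≤ 3 ^ (n + 2) := by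
            calc (9 : ℕ) = 3 ^ 2 := by norm_num
              _ ≤ 3 ^ (n + 2) := Nat.pow_le_pow_right (by norm_num) (by omega)
          omega
      · -- 25 + 2 = 3^z, so z = 3
        right
        refine ⟨rfl, rfl, ?_⟩
        have h27 : (3 : ℕ) ^ 3 = 3 ^ z := by norm_num at h ⊢; omega
        exact (Nat.pow_right_injective (by norm_num) h27).symm
    | 2, _ =>
      -- 5^x + 4 = 3^z
      norm_num at h
      -- mod 8 : z is even
      have hzev : z % 2 = 0 := by
        have e5 : 5 ^ x % 8 = 5 ^ (x % 2) % 8 :=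
          pow_mod_period 5 2 8 (by norm_num) (by decide) x
        have e3 : 3 ^ z % 8 = 3 ^ (z % 2) % 8 :=
          pow_mod_period 3 2 8 (by norm_num) (by decide) z
        have e : (5 ^ (x % 2) % 8 + 4) % 8 = 3 ^ (z % 2) % 8 := by
          rw [← e5, ← e3, ← h]
          omega
        have : ∀ a < 2, ∀ b < 2, (5 ^ a % 8 + 4) % 8 = 3 ^ b % 8 → b = 0 := by decide
        exact this _ (Nat.mod_lt _ (by norm_num)) _ (Nat.mod_lt _ (by norm_num)) e
      obtain ⟨w, rfl⟩ : ∃ w, z = 2 * w := ⟨z / 2, by omega⟩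
      have hw : 1 ≤ w := by omega
      have h3w : 3 ≤ 3 ^ w := by
        calc (3:ℕ) = 3 ^ 1 := by norm_num
          _ ≤ 3 ^ w := Nat.pow_le_pow_right (by norm_num) hw
      obtain ⟨a, ha⟩ : ∃ a, 3 ^ w = a + 2 := ⟨3 ^ w - 2, by omega⟩
      have hsq : 3 ^ (2 * w) = (a + 2) * (a + 2) := by
        rw [two_mul, pow_add, ha]
      have hfac : a * (a + 4) = 5 ^ x := by
        have : (a + 2) * (a + 2) = a * (a + 4) + 4 := by ring
        omega
      -- a divides 5^x, so a = 5^i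
      obtain ⟨i, hi, rfl⟩ := (Nat.dvd_prime_pow (by norm_num : Nat.Prime 5)).mp
        (Dvd.intro _ hfac)
      -- a + 4 divides 5^x, so a + 4 = 5^j
      obtain ⟨j, hj, hj2⟩ := (Nat.dvd_prime_pow (by norm_num : Nat.Prime 5)).mp
        (Dvd.intro_left _ hfac)
      have hi0 : i = 0 := by
        by_contra hc
        have h5i : (5:ℕ) ∣ 5 ^ i := dvd_pow_self 5 hc
        have hj0 : j ≠ 0 := by
          intro hj0
          rw [hj0] at hj2
          simp only [pow_zero] at hj2
          omega
        have h5j : (5:ℕ) ∣ 5 ^ j := dvd_pow_self 5 hj0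
        rw [← hj2] at h5j
        omega
      subst hi0
      simp only [pow_zero] at ha hfac
      have hx1 : x = 1 := by
        have : (5:ℕ) ^ 1 = 5 ^ x := by omega
        exact (Nat.pow_right_injective (by norm_num) this).symm
      have hw1 : w = 1 := by
        have : (3:ℕ) ^ w = 3 ^ 1 := by omega
        exact Nat.pow_right_injective (by norm_num) this
      exact Or.inl ⟨hx1, rfl, by omega⟩
    | (n+3), _ =>
      -- y ≥ 3 : impossible
      exfalso
      -- mod 8 : x and z both even
      have h8 : 2 ^ (n + 3) % 8 = 0 := by
        have : (8:ℕ) ∣ 2 ^ (n + 3) := by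
          calc (8:ℕ) = 2 ^ 3 := by norm_num
            _ ∣ 2 ^ (n + 3) := pow_dvd_pow 2 (by omega)
        omega
      have e5 : 5 ^ x % 8 = 5 ^ (x % 2) % 8 :=
        pow_mod_period 5 2 8 (by norm_num) (by decide) x
      have e3 : 3 ^ (z:ℕ) % 8 = 3 ^ (z % 2) % 8 :=
        pow_mod_period 3 2 8 (by norm_num) (by decide) z
      have e : (5 ^ (x % 2) % 8 + 2 ^ (n + 3) % 8) % 8 = 3 ^ (z % 2) % 8 := by
        rw [← e5, ← e3, ← h]
        omega
      rw [h8] at e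
      have hpar : ∀ a < 2, ∀ b < 2, (5 ^ a % 8 + 0) % 8 = 3 ^ b % 8 → a = 0 ∧ b = 0 := by
        decide
      obtain ⟨hxe, hze⟩ := hpar _ (Nat.mod_lt _ (by norm_num)) _ (Nat.mod_lt _ (by norm_num)) e
      obtain ⟨u, rfl⟩ : ∃ u, x = 2 * u := ⟨x / 2, by omega⟩
      obtain ⟨w, rfl⟩ : ∃ w, z = 2 * w := ⟨z / 2, by omega⟩
      have hu : 1 ≤ u := by omega
      have hw : 1 ≤ w := by omega
      set s := 5 ^ u with hs
      set t := 3 ^ w with ht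
      have hs5 : 5 ≤ s := by
        calc (5:ℕ) = 5 ^ 1 := by norm_num
          _ ≤ 5 ^ u := Nat.pow_le_pow_right (by norm_num) hu
      have hss : 5 ^ (2 * u) = s * s := by rw [two_mul, pow_add]
      have htt : 3 ^ (2 * w) = t * t := by rw [two_mul, pow_add]
      rw [hss, htt] at h
      -- t > s
      have hts : s < t := by
        by_contra hc
        push_neg at hc
        have h2y : 0 < 2 ^ (n + 3) := Nat.pow_pos (by norm_num)
        nlinarith
      obtain ⟨d, hd, hd1⟩ : ∃ d, t = s + d ∧ 1 ≤ d := ⟨t - s, by omega, by omega⟩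
      have hfac : d * (2 * s + d) = 2 ^ (n + 3) := by
        have : (s + d) * (s + d) = s * s + d * (2 * s + d) := by ring
        rw [hd] at h
        omega
      obtain ⟨a, ha, rfl⟩ := (Nat.dvd_prime_pow (by norm_num : Nat.Prime 2)).mp
        (Dvd.intro _ hfac)
      obtain ⟨c, hc, hc2⟩ := (Nat.dvd_prime_pow (by norm_num : Nat.Prime 2)).mp
        (Dvd.intro_left _ hfac)
      -- s is 1 mod 4
      have hs4 : s % 4 = 1 := by
        rw [hs, Nat.pow_mod]
        simp
      -- case analysis on a
      have hc2' : 2 * s + 2 ^ a = 2 ^ c := hc2.symm ▸ rfl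
      have hmod4 : ∀ k : ℕ, 2 ^ k % 4 = 0 ∨ 2 ^ k = 1 ∨ 2 ^ k = 2 := by
        intro k
        match k with
        | 0 => right; left; rfl
        | 1 => right; right; rfl
        | (m+2) =>
          left
          have : (4:ℕ) ∣ 2 ^ (m + 2) := by
            calc (4:ℕ) = 2 ^ 2 := by norm_num
              _ ∣ 2 ^ (m + 2) := pow_dvd_pow 2 (by omega)
          omega
      have ha4 := hmod4 a
      have hcc4 := hmod4 c
      -- 2^a ∈ {1, 2} since 2s + 2^a = 2^c and s ≡ 1 mod 4
      rcases ha4 with h4 | h1 | h2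
      · -- 4 ∣ 2^a : then 2^c ≡ 2 mod 4, so 2^c = 2, impossible
        rcases hcc4 with hc4 | hc1 | hc1 <;> omega
      · -- 2^a = 1 : 2s + 1 = 2^c odd, so 2^c = 1, impossible
        rcases hcc4 with hc4 | hc1 | hc1 <;> omega
      · -- 2^a = 2 : 2s + 2 = 2^c, so s + 1 = 2^(c-1)
        -- then s + 1 ≡ 2 mod 4, so s + 1 = 2, impossible
        have hcge : 3 ≤ c := by
          rcases hcc4 with hc4 | hc1 | hc1
          · by_contra hcl
            interval_cases c <;> omega
          · omega
          · omega
        obtain ⟨m, rfl⟩ : ∃ m, c = m + 3 := ⟨c - 3, by omega⟩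
        have : s + 1 = 2 ^ (m + 2) := by
          have : (2:ℕ) ^ (m + 3) = 2 * 2 ^ (m + 2) := by ring
          omega
        have : (4:ℕ) ∣ 2 ^ (m + 2) := by
          calc (4:ℕ) = 2 ^ 2 := by norm_num
            _ ∣ 2 ^ (m + 2) := pow_dvd_pow 2 (by omega)
        omega
  · rintro (⟨rfl, rfl, rfl⟩ | ⟨rfl, rfl, rfl⟩) <;> norm_num
end
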